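/- arXiv:1609.01338 — 7 statements merged into one kernel-verified Lean document; each statement's English description precedes it below -/
import Mathlib

section
/- Williamson's theorem: Let M ∈ ℝ^{2n×2n} be a positive definite symmetric matrix. Then there exist a diagonal matrix D ∈ ℝ^{n×n} with positive diagonal entries and a symplectic matrix S ∈ Sp(2n) such that SᵀMS = diag(D,D) (the block-diagonal 2n×2n matrix with two copies of D). Moreover D can be chosen with D₁₁ ≥ D₂₂ ≥ … ≥ Dₙₙ > 0. -/
open Matrix

/-- The standard symplectic form σ = [[0, Iₙ], [−Iₙ, 0]] on ℝ^{2n},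
indexed by `Fin n ⊕ Fin n`. -/
def symplJ (n : ℕ) : Matrix (Fin n ⊕ Fin n) (Fin n ⊕ Fin n) ℝ :=
  Matrix.fromBlocks 0 1 (-1) 0

/-- `S ∈ Sp(2n)`: a real `2n × 2n` matrix with `Sᵀ σ S = σ`. -/
def IsSymplectic {n : ℕ} (S : Matrix (Fin n ⊕ Fin n) (Fin n ⊕ Fin n) ℝ) : Prop :=
  Sᵀ * symplJ n * S = symplJ n

/-- The block-diagonal matrix `diag(D, D)` built from the diagonal entries `d`. -/
def Dtilde {n : ℕ} (d : Fin n → ℝ) : Matrix (Fin n ⊕ Fin n) (Fin n ⊕ Fin n) ℝ :=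
  Matrix.fromBlocks (Matrix.diagonal d) 0 0 (Matrix.diagonal d)

set_option linter.unusedSectionVars false
section Aux
variable {m : Type*} [Fintype m] [DecidableEq m]

lemma eig_orth {H : Matrix m m ℂ} (hH : H.IsHermitian) {x y : m → ℂ} {a b : ℝ}
    (hx : H *ᵥ x = (a : ℂ) • x) (hy : H *ᵥ y = (b : ℂ) • y) (hab : a ≠ b) :
    star x ⬝ᵥ y = 0 := by
  have h1 : star x ⬝ᵥ (H *ᵥ y) = (b : ℂ) * (star x ⬝ᵥ y) := by
    rw [hy, dotProduct_smul, smul_eq_mul]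
  have h2 : star x ⬝ᵥ (H *ᵥ y) = (a : ℂ) * (star x ⬝ᵥ y) := by
    rw [dotProduct_mulVec]
    have hvm : star x ᵥ* H = star (H *ᵥ x) := by
      rw [star_mulVec, hH.eq]
    rw [hvm, hx]
    have : star ((a : ℂ) • x) = (a : ℂ) • star x := by
      rw [star_smul]; norm_num
    rw [this, smul_dotProduct, smul_eq_mul]
  have : ((a : ℂ) - b) * (star x ⬝ᵥ y) = 0 := by
    rw [sub_mul, ← h2, ← h1]; ring
  rcases mul_eq_zero.mp this with h | h
  · exact absurd (by exact_mod_cast sub_eq_zero.mp h) hab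
  · exact h

/-- Counting: at most as many positive as negative eigenvalues. -/
lemma dp_sum {κ : Type*} [Fintype κ] (y : m → ℂ) (f : κ → m → ℂ) :
    y ⬝ᵥ (∑ k, f k) = ∑ k, y ⬝ᵥ f k := by
  simp only [dotProduct, Finset.sum_apply, Finset.mul_sum]
  rw [Finset.sum_comm]

lemma card_le_aux {H : Matrix m m ℂ} (hH : H.IsHermitian) (μ : m → ℝ) (v : m → m → ℂ)
    (heig : ∀ j, H *ᵥ v j = (μ j : ℂ) • v j)
    (hneg : ∀ j, H *ᵥ star (v j) = ((-(μ j) : ℝ) : ℂ) • star (v j))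
    (horth : ∀ i j, star (v i) ⬝ᵥ v j = if i = j then 1 else 0)
    (hspan : ∀ x : m → ℂ, (∀ j, v j ⬝ᵥ x = 0) → x = 0) :
    Fintype.card {j // 0 < μ j} ≤ Fintype.card {j // μ j < 0} := by
  classical
  set P := {j // 0 < μ j}
  set N := {j // μ j < 0}
  let Φ : (P → ℂ) →ₗ[ℂ] (N → ℂ) :=
    { toFun := fun c j => ∑ k : P, c k * (v j.1 ⬝ᵥ v k.1)
      map_add' := by
        intro c₁ c₂
        funext j
        simp [add_mul, Finset.sum_add_distrib]
      map_smul' := by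
        intro r c
        funext j
        simp [Finset.mul_sum, mul_assoc] }
  have hΦinj : Function.Injective Φ := by
    rw [injective_iff_map_eq_zero]
    intro c hc
    set x : m → ℂ := ∑ k : P, c k • v k.1 with hx
    have hdot : ∀ j, v j ⬝ᵥ x = ∑ k : P, c k * (v j ⬝ᵥ v k.1) := by
      intro j
      rw [hx, dp_sum]
      congr 1; funext k
      rw [dotProduct_smul, smul_eq_mul]
    have hxz : x = 0 := by
      apply hspan
      intro j
      rcases lt_or_ge (μ j) 0 with hj | hj
      · have := congrFun hc ⟨j, hj⟩
        simpa [Φ, hdot j] using this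
      · rw [hdot]
        apply Finset.sum_eq_zero
        intro k _
        have : v j ⬝ᵥ v k.1 = 0 := by
          have h0 : star (star (v j)) ⬝ᵥ v k.1 = 0 :=
            eig_orth hH (hneg j) (heig k.1) (by nlinarith [k.2])
          simpa using h0
        rw [this, mul_zero]
      -- done
    funext k₀
    have h0 : star (v k₀.1) ⬝ᵥ x = c k₀ := by
      rw [hx, dp_sum]
      have : ∀ k : P, star (v k₀.1) ⬝ᵥ (c k • v k.1) = if k₀ = k then c k else 0 := by
        intro k
        rw [dotProduct_smul, smul_eq_mul, horth]
        by_cases h : k₀ = k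
        · simp [h]
        · have h' : ¬ (k₀.1 = k.1) := fun hh => h (Subtype.ext hh)
          simp [h, h']
      rw [Finset.sum_congr rfl (fun k _ => this k)]
      rw [Finset.sum_eq_single k₀ (fun b _ hb => if_neg (Ne.symm hb)) (fun h => absurd (Finset.mem_univ _) h), if_pos rfl]
    rw [hxz] at h0
    simpa using h0.symm
  have := LinearMap.finrank_le_finrank_of_injective hΦinj
  simpa [Module.finrank_pi] using this

end Aux

set_option maxHeartbeats 2000000 in
/-- **Williamson's theorem.** Every positive definite symmetric
`M ∈ ℝ^{2n×2n}` can be brought to the form `Sᵀ M S = diag(D, D)` with `S`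
symplectic and `D` diagonal with positive entries arranged in decreasing order. -/
theorem williamson (n : ℕ) (M : Matrix (Fin n ⊕ Fin n) (Fin n ⊕ Fin n) ℝ)
    (hM : M.PosDef) :
    ∃ (d : Fin n → ℝ) (S : Matrix (Fin n ⊕ Fin n) (Fin n ⊕ Fin n) ℝ),
      IsSymplectic S ∧ (∀ i, 0 < d i) ∧ Antitone d ∧ Sᵀ * M * S = Dtilde d := by
  classical
  have hMps := hM.posSemidef
  open scoped MatrixOrder in
  set A := CFC.sqrt M with hA
  open scoped MatrixOrder in
  have hAA : A * A = M := CFC.sqrt_mul_sqrt_self M hMps.nonneg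
  open scoped MatrixOrder in
  have hAherm : A.IsHermitian := (Matrix.nonneg_iff_posSemidef.mp (CFC.sqrt_nonneg M)).1
  have hAsymm : Aᵀ = A := by rw [← conjTranspose_eq_transpose_of_trivial]; exact hAherm
  have hAdet : IsUnit A.det := by
    have h1 : A.det * A.det = M.det := by rw [← det_mul, hAA]
    have h2 := hM.det_pos
    have : A.det ≠ 0 := by intro h; rw [h, mul_zero] at h1; exact absurd h1.symm (ne_of_gt h2)
    exact this.isUnit
  set B := A⁻¹ with hB
  have hAB : A * B = 1 := mul_nonsing_inv A hAdet
  have hBA : B * A = 1 := nonsing_inv_mul A hAdet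
  have hBsymm : Bᵀ = B := by rw [hB, transpose_nonsing_inv, hAsymm]
  set J := symplJ n with hJ
  have hJT : Jᵀ = -J := by
    simp [hJ, symplJ, fromBlocks_transpose, Matrix.fromBlocks_neg]
  have hJJ : J * J = -1 := by
    rw [hJ, symplJ, fromBlocks_multiply, ← fromBlocks_one, Matrix.fromBlocks_neg]
    norm_num
  set K := B * J * B with hK
  have hKT : Kᵀ = -K := by
    rw [hK, transpose_mul, transpose_mul, hBsymm, hJT]
    simp [Matrix.mul_assoc]
  have hKdet : IsUnit K.det := by
    have hdJ : IsUnit J.det := by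
      have : J.det * J.det = 1 := by
        have := congrArg Matrix.det hJJ
        rw [det_mul] at this
        rw [this]
        simp [Matrix.det_neg, Fintype.card_sum]
      exact IsUnit.of_mul_eq_one _ this
    have hdB : IsUnit B.det := by
      have : B.det * A.det = 1 := by rw [← det_mul, hBA, det_one]
      exact IsUnit.of_mul_eq_one _ this
    rw [hK, det_mul, det_mul]
    exact (hdB.mul hdJ).mul hdB
  set Kc := K.map (Complex.ofRealHom) with hKc
  have hKcdet : IsUnit Kc.det := by
    have hdet : Kc.det = Complex.ofRealHom K.det := by
      rw [hKc, ← RingHom.mapMatrix_apply, ← RingHom.map_det]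
    rw [hdet]
    exact hKdet.map Complex.ofRealHom
  set H := Complex.I • Kc with hH
  have hKcT : Kcᵀ = -Kc := by
    rw [hKc, ← Matrix.transpose_map, hKT]
    ext i j
    simp
  have hHherm : H.IsHermitian := by
    rw [Matrix.IsHermitian, hH, conjTranspose_smul]
    have : Kcᴴ = Kcᵀ := by
      rw [conjTranspose]
      congr 1
      ext i j
      simp [hKc]
    rw [this, hKcT]
    simp [Complex.conj_I]
  have hHconj : ∀ i k, (starRingEnd ℂ) (H i k) = - H i k := by
    intro i k
    simp [hH, hKc, Complex.conj_I]
  set v : (Fin n ⊕ Fin n) → (Fin n ⊕ Fin n) → ℂ := fun j => ⇑(hHherm.eigenvectorBasis j) with hv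
  set μ := hHherm.eigenvalues with hμ
  have heig : ∀ j, H *ᵥ v j = (μ j : ℂ) • v j := by
    intro j
    have := hHherm.mulVec_eigenvectorBasis j
    rw [hv, hμ]
    rw [this]
    funext i
    simp [Complex.real_smul]
  have horth : ∀ i j, star (v i) ⬝ᵥ v j = if i = j then 1 else 0 := by
    intro i j
    have := orthonormal_iff_ite.mp hHherm.eigenvectorBasis.orthonormal i j
    rw [EuclideanSpace.inner_eq_star_dotProduct] at this
    rw [dotProduct_comm]; exact this
  have hneg : ∀ j, H *ᵥ star (v j) = ((-(μ j) : ℝ) : ℂ) • star (v j) := by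
    intro j
    have h1 : star (H *ᵥ v j) = (- H) *ᵥ star (v j) := by
      funext i
      simp only [Pi.star_apply, mulVec, dotProduct, Matrix.neg_apply, Pi.neg_apply]
      rw [star_sum]
      congr 1; funext k
      rw [star_mul']
      rw [show star (H i k) = -H i k from hHconj i k]
    have h2 : star (H *ᵥ v j) = ((μ j : ℝ) : ℂ) • star (v j) := by
      rw [heig j, star_smul]
      norm_num
    have := h1.symm.trans h2
    have h3 : H *ᵥ star (v j) = -(((μ j : ℝ) : ℂ) • star (v j)) := by
      rw [← this]
      funext i
      simp [mulVec, dotProduct, Finset.sum_neg_distrib]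
    rw [h3]
    push_cast
    rw [neg_smul]
  have hnz : ∀ j, μ j ≠ 0 := by
    intro j hj
    have h0 : H *ᵥ v j = 0 := by rw [heig j, hj]; simp
    have hKv : Kc *ᵥ v j = 0 := by
      have : Kc *ᵥ v j = (-Complex.I) • (H *ᵥ v j) := by
        rw [hH, smul_mulVec, smul_smul]
        simp
      rw [this, h0, smul_zero]
    have hinj := Matrix.mulVec_injective_iff_isUnit.mpr ((isUnit_iff_isUnit_det _).mpr hKcdet)
    have : v j = 0 := by
      apply hinj
      rw [hKv, mulVec_zero]
    have hne := hHherm.eigenvectorBasis.orthonormal.ne_zero j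
    apply hne
    ext i
    exact congrFun this i
  have hspan : ∀ x : (Fin n ⊕ Fin n) → ℂ, (∀ j, v j ⬝ᵥ x = 0) → x = 0 := by
    intro x hx
    set V := (hHherm.eigenvectorUnitary : Matrix (Fin n ⊕ Fin n) (Fin n ⊕ Fin n) ℂ) with hV
    have hVunit : IsUnit V :=
      ⟨⟨V, star V, mem_unitaryGroup_iff.mp hHherm.eigenvectorUnitary.2,
        mem_unitaryGroup_iff'.mp hHherm.eigenvectorUnitary.2⟩, rfl⟩
    have hvm : x ᵥ* V = 0 := by
      funext j
      have h : (x ᵥ* V) j = v j ⬝ᵥ x := by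
        simp [vecMul, dotProduct, hV, hv, mul_comm]
      rw [h, hx j]
      rfl
    have hinj := Matrix.vecMul_injective_iff_isUnit.mpr hVunit
    apply hinj
    show x ᵥ* V = 0 ᵥ* V
    rw [hvm, zero_vecMul]

  -- ================== counting positive eigenvalues ==================
  have hle1 := card_le_aux hHherm μ v heig hneg horth hspan
  have hle2 : Fintype.card {j // μ j < 0} ≤ Fintype.card {j // 0 < μ j} := by
    have hnegH : (-H).IsHermitian := hHherm.neg
    have heig' : ∀ j, (-H) *ᵥ v j = ((-(μ j) : ℝ) : ℂ) • v j := by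
      intro j
      rw [neg_mulVec, heig j]
      push_cast
      rw [neg_smul]
    have hneg' : ∀ j, (-H) *ᵥ star (v j) = ((-(-(μ j)) : ℝ) : ℂ) • star (v j) := by
      intro j
      rw [neg_mulVec, hneg j]
      push_cast
      simp
    have := card_le_aux hnegH (fun j => -(μ j)) v heig' hneg' horth hspan
    calc Fintype.card {j // μ j < 0}
        = Fintype.card {j // 0 < -(μ j)} := Fintype.card_congr
          (Equiv.subtypeEquivRight (fun j => by simp))
      _ ≤ Fintype.card {j // -(μ j) < 0} := this
      _ = Fintype.card {j // 0 < μ j} := Fintype.card_congr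
          (Equiv.subtypeEquivRight (fun j => by simp))
  have hcards : Fintype.card {j // 0 < μ j} + Fintype.card {j // μ j < 0} = n + n := by
    rw [Fintype.card_subtype, Fintype.card_subtype]
    have hfilter : Finset.univ.filter (fun j => μ j < 0)
        = Finset.univ.filter (fun j => ¬ (0 < μ j)) := by
      ext j
      simp only [Finset.mem_filter, Finset.mem_univ, true_and]
      constructor
      · intro h
        exact not_lt.mpr h.le
      · intro h
        exact lt_of_le_of_ne (not_lt.mp h) (hnz j)
    rw [hfilter, Finset.card_filter_add_card_filter_not]
    simp [Finset.card_univ, Fintype.card_sum]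
  have hcardP : Fintype.card {j // 0 < μ j} = n := by omega
  -- ================== selection of positive eigenvalues, sorted ==================
  let g : Fin n ≃ {j // 0 < μ j} := (Fintype.equivFinOfCardEq hcardP).symm
  let σp := Tuple.sort (fun i => μ (g i).1)
  let e : Fin n → Fin n ⊕ Fin n := fun i => (g (σp i)).1
  have heinj : Function.Injective e := by
    intro i j hij
    exact σp.injective (g.injective (Subtype.ext hij))
  have hmono : Monotone (fun i => μ (e i)) := Tuple.monotone_sort (fun i => μ (g i).1)
  have hepos : ∀ i, 0 < μ (e i) := fun i => (g (σp i)).2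
  -- ================== real and imaginary parts ==================
  let X : (Fin n ⊕ Fin n) → (Fin n ⊕ Fin n) → ℝ := fun a i => (v a i).re
  let Y : (Fin n ⊕ Fin n) → (Fin n ⊕ Fin n) → ℝ := fun a i => (v a i).im
  have hzero : ∀ a b, 0 < μ a → 0 < μ b → v a ⬝ᵥ v b = 0 := by
    intro a b ha hb
    have h0 := eig_orth hHherm (hneg a) (heig b) (by nlinarith)
    simpa using h0
  have key : ∀ a b, 0 < μ a → 0 < μ b →
      (X a ⬝ᵥ X b = (if a = b then (1:ℝ) else 0)/2 ∧
       Y a ⬝ᵥ Y b = (if a = b then (1:ℝ) else 0)/2) ∧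
      (X a ⬝ᵥ Y b = 0 ∧ Y a ⬝ᵥ X b = 0) := by
    intro a b ha hb
    have h1 := congrArg Complex.re (horth a b)
    have h2 := congrArg Complex.im (horth a b)
    have h3 := congrArg Complex.re (hzero a b ha hb)
    have h4 := congrArg Complex.im (hzero a b ha hb)
    simp only [dotProduct, Complex.re_sum, Complex.im_sum, Pi.star_apply, Complex.star_def,
      Complex.mul_re, Complex.mul_im, Complex.conj_re, Complex.conj_im, neg_mul,
      sub_neg_eq_add, apply_ite Complex.re, apply_ite Complex.im, Complex.one_re,
      Complex.zero_re, Complex.one_im, Complex.zero_im, ite_self,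
      Finset.sum_add_distrib, Finset.sum_sub_distrib, Finset.sum_neg_distrib,
      Complex.zero_re] at h1 h2 h3 h4
    simp only [dotProduct, X, Y]
    refine ⟨⟨?_, ?_⟩, ?_, ?_⟩
    · by_cases hab : a = b
      · subst hab
        simp only [if_pos rfl] at h1 ⊢
        linarith [h3]
      · simp only [if_neg hab] at h1 ⊢
        linarith [h3]
    · by_cases hab : a = b
      · subst hab
        simp only [if_pos rfl] at h1 ⊢
        linarith [h3]
      · simp only [if_neg hab] at h1 ⊢
        linarith [h3]
    · linarith [h2, h4]
    · linarith [h2, h4]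
  -- K acting on real and imaginary parts
  have hKcv : ∀ a, Kc *ᵥ v a = (-(Complex.I) * (μ a : ℂ)) • v a := by
    intro a
    have h0 : Kc *ᵥ v a = (-Complex.I) • (H *ᵥ v a) := by
      rw [hH, smul_mulVec, smul_smul]
      simp
    rw [h0, heig a, smul_smul]
  have hKX : ∀ a, K *ᵥ X a = μ a • Y a := by
    intro a
    funext i
    have h0 := congrArg Complex.re (congrFun (hKcv a) i)
    simp only [mulVec, dotProduct, Complex.re_sum, hKc, map_apply, Complex.ofRealHom_eq_coe,
      Complex.mul_re, Complex.ofReal_re, Complex.ofReal_im, Pi.smul_apply, smul_eq_mul,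
      Complex.neg_re, Complex.neg_im, Complex.I_re, Complex.I_im, neg_mul, zero_mul,
      zero_sub, neg_neg, one_mul, Complex.mul_im] at h0
    simpa [mulVec, dotProduct, Pi.smul_apply, smul_eq_mul, X, Y] using h0
  have hKY : ∀ a, K *ᵥ Y a = (-(μ a)) • X a := by
    intro a
    funext i
    have h0 := congrArg Complex.im (congrFun (hKcv a) i)
    simp only [mulVec, dotProduct, Complex.im_sum, hKc, map_apply, Complex.ofRealHom_eq_coe,
      Complex.mul_re, Complex.mul_im, Complex.ofReal_re, Complex.ofReal_im, Pi.smul_apply,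
      smul_eq_mul, Complex.neg_re, Complex.neg_im, Complex.I_re, Complex.I_im, neg_mul,
      zero_mul, zero_sub, neg_neg, one_mul, zero_add, mul_zero, add_zero, sub_zero] at h0
    simpa [mulVec, dotProduct, Pi.smul_apply, smul_eq_mul, X, Y] using h0
  -- ================== the orthogonal matrix O ==================
  let c : (Fin n ⊕ Fin n) → (Fin n ⊕ Fin n) → ℝ :=
    Sum.elim (fun i => Real.sqrt 2 • Y (e i)) (fun i => Real.sqrt 2 • X (e i))
  have hsqrt2 : Real.sqrt 2 * Real.sqrt 2 = 2 := Real.mul_self_sqrt (by norm_num)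
  have hOO : Matrix.of c * (Matrix.of c)ᵀ = 1 := by
    ext a b
    have hab : (Matrix.of c * (Matrix.of c)ᵀ) a b = c a ⬝ᵥ c b := by
      simp [Matrix.mul_apply, dotProduct]
    rw [hab]
    rcases a with i | i <;> rcases b with i' | i' <;>
        obtain ⟨⟨hxx, hyy⟩, hxy, hyx⟩ := key (e i) (e i') (hepos i) (hepos i') <;>
        simp only [c, Sum.elim_inl, Sum.elim_inr, smul_dotProduct, dotProduct_smul,
          smul_eq_mul]
    · rw [hyy]
      by_cases h : i = i'
      · subst h
        simp only [eq_self_iff_true, if_true, Matrix.one_apply_eq]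
        linear_combination (1/2 : ℝ) * hsqrt2
      · rw [if_neg (fun hh => h (heinj hh)), Matrix.one_apply_ne (by simp [h])]
        ring
    · rw [hyx, Matrix.one_apply_ne (by simp)]
      ring
    · rw [hxy, Matrix.one_apply_ne (by simp)]
      ring
    · rw [hxx]
      by_cases h : i = i'
      · subst h
        simp only [eq_self_iff_true, if_true, Matrix.one_apply_eq]
        linear_combination (1/2 : ℝ) * hsqrt2
      · rw [if_neg (fun hh => h (heinj hh)), Matrix.one_apply_ne (by simp [h])]
        ring
  have hKO : Matrix.of c * K * (Matrix.of c)ᵀ = fromBlocks 0 (Matrix.diagonal (fun i => μ (e i))) (-(Matrix.diagonal (fun i => μ (e i)))) 0 := by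
    ext a b
    have hab : (Matrix.of c * K * (Matrix.of c)ᵀ) a b = c a ⬝ᵥ (K *ᵥ c b) := by
      rw [Matrix.mul_assoc]
      simp [Matrix.mul_apply, dotProduct, mulVec, Finset.mul_sum]
    rw [hab]
    rcases a with i | i <;> rcases b with i' | i' <;>
        obtain ⟨⟨hxx, hyy⟩, hxy, hyx⟩ := key (e i) (e i') (hepos i) (hepos i')
    · rw [show c (Sum.inl i') = Real.sqrt 2 • Y (e i') from rfl, mulVec_smul, hKY (e i')]
      rw [show c (Sum.inl i) = Real.sqrt 2 • Y (e i) from rfl]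
      rw [smul_dotProduct, dotProduct_smul, dotProduct_smul, hyx]
      simp
    · rw [show c (Sum.inr i') = Real.sqrt 2 • X (e i') from rfl, mulVec_smul, hKX (e i')]
      rw [show c (Sum.inl i) = Real.sqrt 2 • Y (e i) from rfl]
      rw [smul_dotProduct, dotProduct_smul, dotProduct_smul, hyy]
      rw [Matrix.fromBlocks_apply₁₂]
      by_cases h : i = i'
      · subst h
        rw [Matrix.diagonal_apply_eq]
        simp only [eq_self_iff_true, if_true, smul_eq_mul]
        linear_combination (μ (e i) / 2 : ℝ) * hsqrt2
      · rw [Matrix.diagonal_apply_ne _ h, if_neg (fun hh => h (heinj hh))]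
        simp
    · rw [show c (Sum.inl i') = Real.sqrt 2 • Y (e i') from rfl, mulVec_smul, hKY (e i')]
      rw [show c (Sum.inr i) = Real.sqrt 2 • X (e i) from rfl]
      rw [smul_dotProduct, dotProduct_smul, dotProduct_smul, hxx]
      rw [Matrix.fromBlocks_apply₂₁]
      by_cases h : i = i'
      · subst h
        rw [Matrix.neg_apply, Matrix.diagonal_apply_eq]
        simp only [eq_self_iff_true, if_true, smul_eq_mul]
        linear_combination (-(μ (e i)) / 2 : ℝ) * hsqrt2
      · rw [Matrix.neg_apply, Matrix.diagonal_apply_ne _ h, if_neg (fun hh => h (heinj hh))]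
        simp
    · rw [show c (Sum.inr i') = Real.sqrt 2 • X (e i') from rfl, mulVec_smul, hKX (e i')]
      rw [show c (Sum.inr i) = Real.sqrt 2 • X (e i) from rfl]
      rw [smul_dotProduct, dotProduct_smul, dotProduct_smul, hxy]
      simp
  -- ================== assembly ==================
  let w : Fin n → ℝ := fun i => (Real.sqrt (μ (e i)))⁻¹
  have hνsqrt : ∀ i, Real.sqrt (μ (e i)) * Real.sqrt (μ (e i)) = μ (e i) :=
    fun i => Real.mul_self_sqrt (hepos i).le
  have hsqrtpos : ∀ i, 0 < Real.sqrt (μ (e i)) := fun i => Real.sqrt_pos.mpr (hepos i)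
  have hw1 : ∀ i, w i * μ (e i) * w i = 1 := by
    intro i
    show (Real.sqrt (μ (e i)))⁻¹ * μ (e i) * (Real.sqrt (μ (e i)))⁻¹ = 1
    rw [show μ (e i) = Real.sqrt (μ (e i)) * Real.sqrt (μ (e i)) from (hνsqrt i).symm]
    field_simp
    rw [Real.sqrt_sq (hsqrtpos i).le]; exact div_self (pow_ne_zero 2 (hsqrtpos i).ne')
  have hww : ∀ i, w i * w i = (μ (e i))⁻¹ := by
    intro i
    show (Real.sqrt (μ (e i)))⁻¹ * (Real.sqrt (μ (e i)))⁻¹ = (μ (e i))⁻¹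
    rw [← mul_inv, hνsqrt i]
  let Rinv := Dtilde w
  have hRT : Rinvᵀ = Rinv := by
    show (Dtilde w)ᵀ = Dtilde w
    simp [Dtilde, fromBlocks_transpose, Matrix.diagonal_transpose]
  have hST : (B * (Matrix.of c)ᵀ * Rinv)ᵀ = Rinv * ((Matrix.of c) * B) := by
    rw [transpose_mul, transpose_mul, transpose_transpose, hRT, hBsymm]
  refine ⟨fun i => (μ (e i))⁻¹, B * (Matrix.of c)ᵀ * Rinv, ?_, ?_, ?_, ?_⟩
  · show (B * (Matrix.of c)ᵀ * Rinv)ᵀ * symplJ n * (B * (Matrix.of c)ᵀ * Rinv) = symplJ n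
    rw [hST, ← hJ]
    have h1 : Rinv * ((Matrix.of c) * B) * J * (B * (Matrix.of c)ᵀ * Rinv)
        = Rinv * ((Matrix.of c) * K * (Matrix.of c)ᵀ) * Rinv := by
      rw [hK]
      simp only [Matrix.mul_assoc]
    rw [h1, hKO, hJ, symplJ]
    show Dtilde w * fromBlocks 0 (Matrix.diagonal (fun i => μ (e i))) (-(Matrix.diagonal (fun i => μ (e i)))) 0 * Dtilde w = _
    rw [Dtilde, fromBlocks_multiply, fromBlocks_multiply]
    simp only [Matrix.mul_zero, Matrix.zero_mul, add_zero, zero_add, Matrix.mul_neg,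
      Matrix.neg_mul, Matrix.diagonal_mul_diagonal, neg_zero]
    rw [show (Matrix.diagonal fun i => w i * μ (e i) * w i) = (1 : Matrix (Fin n) (Fin n) ℝ) from by
      rw [show (fun i => w i * μ (e i) * w i) = fun _ => (1:ℝ) from funext hw1]
      exact Matrix.diagonal_one]
  · intro i
    exact inv_pos.mpr (hepos i)
  · intro i j hij
    have h1 : μ (e i) ≤ μ (e j) := hmono hij
    have := one_div_le_one_div_of_le (hepos i) h1
    simpa [one_div] using this
  · rw [hST]
    have hBMB : B * M * B = 1 := by
      rw [← hAA]
      have h2 : B * (A * A) * B = (B * A) * (A * B) := by simp only [Matrix.mul_assoc]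
      rw [h2, hBA, hAB, one_mul]
    have h1 : Rinv * ((Matrix.of c) * B) * M * (B * (Matrix.of c)ᵀ * Rinv)
        = Rinv * ((Matrix.of c) * (B * M * B) * (Matrix.of c)ᵀ) * Rinv := by
      simp only [Matrix.mul_assoc]
    rw [h1, hBMB, Matrix.mul_one, hOO, Matrix.mul_one]
    show Dtilde w * Dtilde w = _
    rw [Dtilde, Dtilde, fromBlocks_multiply]
    simp only [Matrix.mul_zero, Matrix.zero_mul, add_zero, zero_add,
      Matrix.diagonal_mul_diagonal]
    rw [show (fun i => w i * w i) = (fun i => (μ (e i))⁻¹) from funext hww]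
end

section
/- Let M ∈ ℝ^{2n×2n} be positive definite symmetric with symplectic eigenvalues d₁ ≥ … ≥ dₙ > 0. Then the complex matrix iσM is diagonalisable, all its eigenvalues are real, and counted with multiplicity its eigenvalues are exactly +d₁, …, +dₙ, −d₁, …, −dₙ; equivalently, the characteristic polynomial of iσM is ∏_{j=1}^n (λ² − dⱼ²). -/
open Matrix

open Polynomial

section aux
variable {m : Type*} [Fintype m] [DecidableEq m] {R : Type*} [CommRing R]

lemma my_charpoly_conj (T Tinv A : Matrix m m R) (h1 : T * Tinv = 1) :
    (T * A * Tinv).charpoly = A.charpoly := by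
  have h1' : (C : R →+* R[X]).mapMatrix T * (C : R →+* R[X]).mapMatrix Tinv = 1 := by
    rw [← _root_.map_mul, h1, _root_.map_one]
  have key : charmatrix (T * A * Tinv) =
      (C : R →+* R[X]).mapMatrix T * charmatrix A * (C : R →+* R[X]).mapMatrix Tinv := by
    unfold charmatrix
    rw [mul_sub, sub_mul, _root_.map_mul, _root_.map_mul]
    congr 1
    have hc : (C : R →+* R[X]).mapMatrix T * Matrix.scalar m (X : R[X]) =
        Matrix.scalar m (X : R[X]) * (C : R →+* R[X]).mapMatrix T :=
      (Matrix.scalar_commute (X : R[X]) (fun r => Commute.all _ _) _).symm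
    rw [hc, Matrix.mul_assoc, h1', Matrix.mul_one]
  unfold Matrix.charpoly
  rw [key, Matrix.det_mul, Matrix.det_mul, mul_comm, ← mul_assoc, ← Matrix.det_mul,
    mul_eq_one_comm.mp h1', Matrix.det_one, one_mul]

lemma my_charpoly_diagonal (v : m → R) :
    (Matrix.diagonal v).charpoly = ∏ i, (X - C (v i)) := by
  unfold Matrix.charpoly
  have : charmatrix (Matrix.diagonal v) = Matrix.diagonal (fun i => X - C (v i)) := by
    ext i j
    by_cases h : i = j
    · subst h; simp [charmatrix_apply_eq]
    · simp [charmatrix_apply_ne _ _ _ h, Matrix.diagonal_apply_ne _ h]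
  rw [this, Matrix.det_diagonal]

end aux


/-- If `M` is positive definite with symplectic eigenvalues
`d₁ ≥ … ≥ dₙ > 0` (i.e. `Sᵀ M S = diag(D,D)` for some symplectic `S`), then the
complex matrix `iσM` is diagonalisable with real eigenvalues
`+d₁, …, +dₙ, −d₁, …, −dₙ` (with multiplicity); equivalently, its characteristic
polynomial is `∏ⱼ (λ² − dⱼ²)`. -/
theorem eigenvalues_of_i_sigma_M (n : ℕ)
    (M S : Matrix (Fin n ⊕ Fin n) (Fin n ⊕ Fin n) ℝ) (d : Fin n → ℝ)
    (hM : M.PosDef) (hS : IsSymplectic S)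
    (hd : ∀ i, 0 < d i) (hmono : Antitone d)
    (hW : Sᵀ * M * S = Dtilde d) :
    (∃ T : Matrix (Fin n ⊕ Fin n) (Fin n ⊕ Fin n) ℂ, IsUnit T ∧
        Complex.I • ((symplJ n * M).map (Complex.ofReal ·)) =
          T * Matrix.diagonal
              (Sum.elim (fun j => (d j : ℂ)) (fun j => -(d j : ℂ))) * T⁻¹) ∧
      (Complex.I • ((symplJ n * M).map (Complex.ofReal ·))).charpoly =
        ∏ j : Fin n, (Polynomial.X ^ 2 - Polynomial.C ((d j : ℂ) ^ 2)) := by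
  classical
  have hS' : Sᵀ * symplJ n * S = symplJ n := hS
  set J := symplJ n with hJdef
  have hJJ : J * J = -1 := by
    show symplJ n * symplJ n = -1
    rw [symplJ, Matrix.fromBlocks_multiply]
    rw [show (-1 : Matrix (Fin n ⊕ Fin n) (Fin n ⊕ Fin n) ℝ) = -(Matrix.fromBlocks 1 0 0 1) from by rw [Matrix.fromBlocks_one], Matrix.fromBlocks_neg]
    simp
  -- left/right inverse of S
  set Q : Matrix (Fin n ⊕ Fin n) (Fin n ⊕ Fin n) ℝ := -(J * Sᵀ * J) with hQdef
  have h3 : Q * S = 1 := by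
    have h : J * (Sᵀ * J * S) = -1 := by rw [hS', hJJ]
    calc Q * S = -(J * (Sᵀ * J * S)) := by
          rw [hQdef]; simp [Matrix.mul_assoc]
      _ = 1 := by rw [h, neg_neg]
  have h4 : S * Q = 1 := mul_eq_one_comm.mp h3
  have h5 : S * J * Sᵀ = J := by
    have h4' : S * J * Sᵀ * J = -1 := by
      have : S * -(J * Sᵀ * J) = 1 := h4
      rw [Matrix.mul_neg, neg_eq_iff_eq_neg] at this
      calc S * J * Sᵀ * J = S * (J * Sᵀ * J) := by simp [Matrix.mul_assoc]
        _ = -1 := this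
    calc S * J * Sᵀ = S * J * Sᵀ * 1 := by rw [Matrix.mul_one]
      _ = S * J * Sᵀ * -(J * J) := by rw [hJJ, neg_neg]
      _ = -(S * J * Sᵀ * J * J) := by simp [Matrix.mul_assoc]
      _ = -(-1 * J) := by rw [h4']
      _ = J := by simp
  have hkey : J * M * S = S * (J * Dtilde d) := by
    calc J * M * S = (S * J * Sᵀ) * M * S := by rw [h5]
      _ = S * (J * (Sᵀ * M * S)) := by simp [Matrix.mul_assoc]
      _ = S * (J * Dtilde d) := by rw [hW]
  -- complexify
  set f : ℝ →+* ℂ := Complex.ofRealHom with hfdef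
  have hmapf : ∀ (A : Matrix (Fin n ⊕ Fin n) (Fin n ⊕ Fin n) ℝ),
      A.map (Complex.ofReal ·) = f.mapMatrix A := fun A => rfl
  set Jc := f.mapMatrix J with hJc
  set Mc := f.mapMatrix M with hMc
  set Sc := f.mapMatrix S with hSc
  set Qc := f.mapMatrix Q with hQc
  set Dc := f.mapMatrix (Dtilde d) with hDc
  have hkeyC : Jc * Mc * Sc = Sc * (Jc * Dc) := by
    rw [hJc, hMc, hSc, hDc, ← _root_.map_mul, ← _root_.map_mul, ← _root_.map_mul,
      ← _root_.map_mul, hkey]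
  have hSQ : Sc * Qc = 1 := by rw [hSc, hQc, ← _root_.map_mul, h4, _root_.map_one]
  have hQS : Qc * Sc = 1 := by rw [hQc, hSc, ← _root_.map_mul, h3, _root_.map_one]
  -- block form of complexified matrices
  have hDcblock : Dc = Matrix.fromBlocks
      (Matrix.diagonal (fun j => (d j : ℂ))) 0 0 (Matrix.diagonal (fun j => (d j : ℂ))) := by
    rw [hDc, RingHom.mapMatrix_apply, Dtilde, Matrix.fromBlocks_map]
    congr 1 <;> simp [Matrix.diagonal_map, hfdef]
  have hJcblock : Jc = Matrix.fromBlocks 0 1 (-1) 0 := by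
    rw [hJc, RingHom.mapMatrix_apply, hJdef, symplJ, Matrix.fromBlocks_map]
    ext (i|i) (j|j) <;> simp [Matrix.map_apply, hfdef, Matrix.one_apply, apply_ite]
  -- the diagonalising block matrix
  set T0 : Matrix (Fin n ⊕ Fin n) (Fin n ⊕ Fin n) ℂ :=
    Matrix.fromBlocks 1 1 ((-Complex.I) • 1) (Complex.I • 1) with hT0
  set T0i : Matrix (Fin n ⊕ Fin n) (Fin n ⊕ Fin n) ℂ :=
    (2 : ℂ)⁻¹ • Matrix.fromBlocks 1 (Complex.I • 1) 1 ((-Complex.I) • 1) with hT0i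
  have hTT : T0 * T0i = 1 := by
    have b11 : (1 : Matrix (Fin n) (Fin n) ℂ) * 1 + 1 * 1 = (2 : ℂ) • 1 := by
      simp [two_smul]
    have b12 : (1 : Matrix (Fin n) (Fin n) ℂ) * (Complex.I • 1) + 1 * ((-Complex.I) • 1)
        = (2 : ℂ) • (0 : Matrix (Fin n) (Fin n) ℂ) := by simp [neg_smul]
    have b21 : ((-Complex.I) • (1 : Matrix (Fin n) (Fin n) ℂ)) * 1 + (Complex.I • 1) * 1
        = (2 : ℂ) • (0 : Matrix (Fin n) (Fin n) ℂ) := by simp [neg_smul]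
    have b22 : ((-Complex.I) • (1 : Matrix (Fin n) (Fin n) ℂ)) * (Complex.I • 1)
        + (Complex.I • 1) * ((-Complex.I) • 1) = (2 : ℂ) • 1 := by
      rw [Matrix.smul_mul, Matrix.smul_mul, Matrix.one_mul, Matrix.one_mul, smul_smul,
        smul_smul]
      simp [neg_mul, mul_neg, Complex.I_mul_I, two_smul]
    have hbig : Matrix.fromBlocks 1 1 ((-Complex.I) • 1) (Complex.I • 1) *
        Matrix.fromBlocks 1 (Complex.I • 1) 1 ((-Complex.I) • 1) =
        (2 : ℂ) • (1 : Matrix (Fin n ⊕ Fin n) (Fin n ⊕ Fin n) ℂ) := by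
      rw [Matrix.fromBlocks_multiply, b11, b12, b21, b22, ← Matrix.fromBlocks_smul,
        Matrix.fromBlocks_one]
    rw [hT0, hT0i, Matrix.mul_smul, hbig, smul_smul]
    norm_num
  have hTiT : T0i * T0 = 1 := mul_eq_one_comm.mp hTT
  set Λ : Matrix (Fin n ⊕ Fin n) (Fin n ⊕ Fin n) ℂ :=
    Matrix.diagonal (Sum.elim (fun j => (d j : ℂ)) (fun j => -(d j : ℂ))) with hΛ
  have hΛblock : Λ = Matrix.fromBlocks (Matrix.diagonal (fun j => (d j : ℂ))) 0 0
      (Matrix.diagonal (fun j => -(d j : ℂ))) := by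
    rw [hΛ, ← Matrix.fromBlocks_diagonal]
  set D : Matrix (Fin n) (Fin n) ℂ := Matrix.diagonal (fun j => (d j : ℂ)) with hD
  have hD' : Matrix.diagonal (fun j => -(d j : ℂ)) = -D := by
    rw [hD, ← Matrix.diagonal_neg]
  have hblock : Complex.I • (Jc * Dc) * T0 = T0 * Λ := by
    have e1 : Jc * Dc = Matrix.fromBlocks 0 D (-D) 0 := by
      rw [hJcblock, hDcblock, Matrix.fromBlocks_multiply]
      congr 1 <;> simp
    have e2 : Matrix.fromBlocks 0 D (-D) 0 * T0 =
        Matrix.fromBlocks ((-Complex.I) • D) (Complex.I • D) (-D) (-D) := by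
      rw [hT0, Matrix.fromBlocks_multiply]
      congr 1 <;> simp [Matrix.mul_smul]
    have e3 : Complex.I • Matrix.fromBlocks ((-Complex.I) • D) (Complex.I • D) (-D) (-D) =
        Matrix.fromBlocks D (-D) (-(Complex.I • D)) (-(Complex.I • D)) := by
      rw [Matrix.fromBlocks_smul]
      congr 1 <;> simp [smul_smul, Complex.I_mul_I]
    have e4 : T0 * Λ = Matrix.fromBlocks D (-D) (-(Complex.I • D)) (-(Complex.I • D)) := by
      rw [hT0, hΛblock, hD', Matrix.fromBlocks_multiply]
      congr 1 <;> simp [Matrix.smul_mul, Matrix.mul_smul, neg_smul, smul_neg]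
    rw [e1, Matrix.smul_mul, e2, e3, e4]
  -- assemble
  set T : Matrix (Fin n ⊕ Fin n) (Fin n ⊕ Fin n) ℂ := Sc * T0 with hT
  set Ti : Matrix (Fin n ⊕ Fin n) (Fin n ⊕ Fin n) ℂ := T0i * Qc with hTi
  have hTTi : T * Ti = 1 := by
    rw [hT, hTi]
    calc Sc * T0 * (T0i * Qc) = Sc * (T0 * T0i) * Qc := by simp [Matrix.mul_assoc]
      _ = 1 := by rw [hTT, Matrix.mul_one, hSQ]
  have hinv : T⁻¹ = Ti := Matrix.inv_eq_right_inv hTTi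
  have hmain : Complex.I • ((symplJ n * M).map (Complex.ofReal ·)) = T * Λ * Ti := by
    have hlhs : (symplJ n * M).map (Complex.ofReal ·) = Jc * Mc := by
      rw [hmapf, ← hJdef, _root_.map_mul, hJc, hMc]
    rw [hlhs]
    have h6 : Jc * Mc = Sc * (Jc * Dc) * Qc := by
      calc Jc * Mc = Jc * Mc * (Sc * Qc) := by rw [hSQ, Matrix.mul_one]
        _ = (Jc * Mc * Sc) * Qc := by rw [← Matrix.mul_assoc]
        _ = Sc * (Jc * Dc) * Qc := by rw [hkeyC]
    have h7 : Complex.I • (Jc * Dc) = T0 * Λ * T0i := by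
      calc Complex.I • (Jc * Dc) = Complex.I • (Jc * Dc) * (T0 * T0i) := by
            rw [hTT, Matrix.mul_one]
        _ = (Complex.I • (Jc * Dc) * T0) * T0i := by rw [Matrix.mul_assoc]
        _ = T0 * Λ * T0i := by rw [hblock]
    calc Complex.I • (Jc * Mc) = Complex.I • (Sc * (Jc * Dc) * Qc) := by rw [h6]
      _ = Sc * (Complex.I • (Jc * Dc)) * Qc := by
          rw [Matrix.mul_smul, Matrix.smul_mul]
      _ = Sc * (T0 * Λ * T0i) * Qc := by rw [h7]
      _ = T * Λ * Ti := by rw [hT, hTi]; simp [Matrix.mul_assoc]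
  constructor
  · exact ⟨T, ⟨⟨T, Ti, hTTi, mul_eq_one_comm.mp hTTi⟩, rfl⟩,
      by rw [hinv, hmain]⟩
  · rw [hmain, my_charpoly_conj T Ti Λ hTTi, hΛ, my_charpoly_diagonal,
      Fintype.prod_sum_type]
    simp only [Sum.elim_inl, Sum.elim_inr]
    rw [← Finset.prod_mul_distrib]
    refine Finset.prod_congr rfl fun j _ => ?_
    rw [map_neg, sub_neg_eq_add, _root_.map_pow]
    ring
end

section
/- No uniform constant in the symplectic spectrum stability bound: Let M = diag(x,1) ∈ ℝ^{2×2}, E = [[2,−5],[−5,−2]] and M_ε := M + εE. Then for every ε with 0 < ε < 1/10 and every c > 0 there exists x₀ ≥ 1 such that for all x ≥ x₀: M and M_ε are positive definite and, denoting by D̃ and D̃_ε their Williamson diagonal forms (n = 1), one has ‖D̃ − D̃_ε‖ > c·‖M − M_ε‖ for every unitarily invariant norm ‖·‖. In particular, no inequality of the form ‖D̃ − D̃′‖ ≤ c‖M − M′‖ can hold with a constant c independent of M and M′. -/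
set_option maxHeartbeats 1000000


open Matrix

/-- `N` is a unitarily invariant norm on square complex matrices. -/
def IsUnitarilyInvariantNorm {ι : Type*} [Fintype ι] [DecidableEq ι]
    (N : Matrix ι ι ℂ → ℝ) : Prop :=
  (∀ A B, N (A + B) ≤ N A + N B) ∧
  (∀ (c : ℂ) (A), N (c • A) = ‖c‖ * N A) ∧
  (∀ A, N A = 0 → A = 0) ∧
  (∀ (A : Matrix ι ι ℂ) (U V : Matrix.unitaryGroup ι ℂ),
    N ((U : Matrix ι ι ℂ) * A * (V : Matrix ι ι ℂ)) = N A)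

/-- The matrix `M = diag(x, 1)` (as a `2 × 2` matrix, `n = 1`). -/
def Mmat (x : ℝ) : Matrix (Fin 1 ⊕ Fin 1) (Fin 1 ⊕ Fin 1) ℝ :=
  Matrix.fromBlocks (Matrix.of fun _ _ => x) 0 0 (Matrix.of fun _ _ => 1)

/-- The perturbation `E = [[2, −5], [−5, −2]]`. -/
def Emat : Matrix (Fin 1 ⊕ Fin 1) (Fin 1 ⊕ Fin 1) ℝ :=
  Matrix.fromBlocks (Matrix.of fun _ _ => 2) (Matrix.of fun _ _ => -5)
    (Matrix.of fun _ _ => -5) (Matrix.of fun _ _ => -2)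

/- ### Auxiliary lemmas -/

lemma det11 (M : Matrix (Fin 1 ⊕ Fin 1) (Fin 1 ⊕ Fin 1) ℝ) :
    M.det = M (Sum.inl 0) (Sum.inl 0) * M (Sum.inr 0) (Sum.inr 0)
      - M (Sum.inl 0) (Sum.inr 0) * M (Sum.inr 0) (Sum.inl 0) := by
  rw [← Matrix.det_submatrix_equiv_self finSumFinEquiv.symm M, Matrix.det_fin_two]
  have h0 : (finSumFinEquiv.symm (0 : Fin (1+1)) : Fin 1 ⊕ Fin 1) = Sum.inl 0 := rfl
  have h1 : (finSumFinEquiv.symm (1 : Fin (1+1)) : Fin 1 ⊕ Fin 1) = Sum.inr 0 := rfl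
  simp [Matrix.submatrix_apply, h0, h1]

lemma detJ : (symplJ 1).det = 1 := by
  rw [det11]; simp [symplJ]

lemma det_sq_symp {S : Matrix (Fin 1 ⊕ Fin 1) (Fin 1 ⊕ Fin 1) ℝ}
    (h : IsSymplectic S) : S.det ^ 2 = 1 := by
  have := congrArg Matrix.det h
  rw [Matrix.det_mul, Matrix.det_mul, Matrix.det_transpose, detJ] at this
  nlinarith [this]

lemma det_Dtilde (d : Fin 1 → ℝ) : (Dtilde d).det = d 0 ^ 2 := by
  rw [det11]
  simp [Dtilde, Matrix.diagonal, sq]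

lemma det_Mmat (x : ℝ) : (Mmat x).det = x := by
  rw [det11]; simp [Mmat]

lemma det_Mε (x ε : ℝ) : (Mmat x + ε • Emat).det = (x + 2*ε) * (1 - 2*ε) - 25*ε^2 := by
  rw [det11]; simp [Mmat, Emat]; ring

lemma dsub (d dε : Fin 1 → ℝ) :
    Dtilde d - Dtilde dε = (d 0 - dε 0) • (1 : Matrix (Fin 1 ⊕ Fin 1) (Fin 1 ⊕ Fin 1) ℝ) := by
  ext (i | i) (j | j) <;>
    simp [Dtilde, Matrix.one_apply, Matrix.diagonal, Subsingleton.elim i j,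
      Fin.fin_one_eq_zero]

lemma mapsmul (r : ℝ) (A : Matrix (Fin 1 ⊕ Fin 1) (Fin 1 ⊕ Fin 1) ℝ) :
    (r • A).map (Complex.ofReal ·) = (r : ℂ) • A.map (Complex.ofReal ·) := by
  ext i j; simp

lemma mapone :
    ((1 : Matrix (Fin 1 ⊕ Fin 1) (Fin 1 ⊕ Fin 1) ℝ)).map (Complex.ofReal ·) = 1 := by
  ext i j; by_cases h : i = j <;> simp [Matrix.one_apply, h]

noncomputable def EmatC : Matrix (Fin 1 ⊕ Fin 1) (Fin 1 ⊕ Fin 1) ℂ :=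
  Emat.map (Complex.ofReal ·)

lemma Esq : EmatC * EmatC = (29 : ℂ) • 1 := by
  ext (i | i) (j | j) <;>
    simp [EmatC, Emat, Matrix.mul_apply, Fintype.sum_sum_type, Matrix.one_apply,
      Subsingleton.elim i j] <;> norm_num

lemma Estar : star EmatC = EmatC := by
  ext (i | i) (j | j) <;>
    simp [EmatC, Emat, Matrix.conjTranspose_apply, Subsingleton.elim i j]

lemma sqrt29_ne : ((Real.sqrt 29 : ℂ)) ≠ 0 := by
  simp [Real.sqrt_eq_zero']

noncomputable def Uc : Matrix (Fin 1 ⊕ Fin 1) (Fin 1 ⊕ Fin 1) ℂ :=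
  ((Real.sqrt 29 : ℂ))⁻¹ • EmatC

lemma Uc_unitary : Uc ∈ Matrix.unitaryGroup (Fin 1 ⊕ Fin 1) ℂ := by
  rw [Matrix.mem_unitaryGroup_iff]
  have hstar : star Uc = Uc := by
    rw [Uc, star_smul, Estar]
    congr 1
    rw [star_inv₀]
    congr 1
    simp [RCLike.star_def, Complex.conj_ofReal]
  rw [hstar, Uc, smul_mul_smul_comm, Esq, smul_smul]
  have h29 : ((Real.sqrt 29 : ℂ))⁻¹ * (Real.sqrt 29 : ℂ)⁻¹ * 29 = 1 := by
    rw [← mul_inv, ← Complex.ofReal_mul, Real.mul_self_sqrt (by norm_num)]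
    norm_num
  rw [h29, one_smul]

lemma EmatC_eq : EmatC = (Real.sqrt 29 : ℂ) • Uc := by
  rw [Uc, smul_inv_smul₀ sqrt29_ne]

lemma norm_facts (N : Matrix (Fin 1 ⊕ Fin 1) (Fin 1 ⊕ Fin 1) ℂ → ℝ)
    (hN : IsUnitarilyInvariantNorm N) :
    N EmatC = Real.sqrt 29 * N 1 ∧ 0 < N 1 := by
  obtain ⟨htri, hsm, hz, hinv⟩ := hN
  have hU : N Uc = N 1 := by
    have := hinv 1 ⟨Uc, Uc_unitary⟩ 1
    simpa using this
  have hE : N EmatC = Real.sqrt 29 * N 1 := by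
    rw [EmatC_eq, hsm, hU]
    congr 1
    simp [Complex.norm_real, Real.sqrt_nonneg, abs_of_nonneg]
  refine ⟨hE, ?_⟩
  have h0 : N 0 = 0 := by
    have := hsm 0 0
    simpa using this
  have hnonneg : 0 ≤ N 1 := by
    have h2 : N ((-1 : ℂ) • (1 : Matrix (Fin 1 ⊕ Fin 1) (Fin 1 ⊕ Fin 1) ℂ)) = N 1 := by
      rw [hsm]; simp
    have := htri 1 ((-1 : ℂ) • 1)
    simp only [h2] at this
    have h3 : (1 : Matrix (Fin 1 ⊕ Fin 1) (Fin 1 ⊕ Fin 1) ℂ) + (-1 : ℂ) • 1 = 0 := by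
      simp
    rw [h3, h0] at this
    linarith
  rcases hnonneg.lt_or_eq with h | h
  · exact h
  · exact absurd (hz 1 h.symm) one_ne_zero

lemma sqrt_add_le (a b : ℝ) (ha : 0 ≤ a) (hb : 0 ≤ b) :
    Real.sqrt (a + b) ≤ Real.sqrt a + Real.sqrt b := by
  have h := Real.sqrt_le_sqrt (show a + b ≤ (Real.sqrt a + Real.sqrt b)^2 by
    nlinarith [Real.sq_sqrt ha, Real.sq_sqrt hb,
      mul_nonneg (Real.sqrt_nonneg a) (Real.sqrt_nonneg b)])
  rwa [Real.sqrt_sq (by positivity)] at h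

lemma posdef_M (x : ℝ) (hx : 1 ≤ x) : (Mmat x).PosDef := by
  rw [Matrix.posDef_iff_dotProduct_mulVec]
  constructor
  · ext (i | i) (j | j) <;>
      simp [Mmat, Matrix.conjTranspose_apply, Subsingleton.elim i j]
  · intro v hv
    have hab : v (Sum.inl 0) ≠ 0 ∨ v (Sum.inr 0) ≠ 0 := by
      by_contra h
      push_neg at h
      apply hv
      funext i
      rcases i with i | i <;> rw [Subsingleton.elim i 0] <;> simp [h.1, h.2]
    set a := v (Sum.inl 0)
    set b := v (Sum.inr 0)
    have hq : star v ⬝ᵥ (Mmat x) *ᵥ v = x * a^2 + b^2 := by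
      simp [dotProduct, Matrix.mulVec, Fintype.sum_sum_type, Mmat]
      ring
    rw [hq]
    have habs : 0 < a^2 + b^2 := by
      rcases hab with h | h
      · positivity
      · positivity
    nlinarith [sq_nonneg a, sq_nonneg b, mul_nonneg (by linarith : (0:ℝ) ≤ x - 1) (sq_nonneg a)]

lemma posdef_Mε (x ε : ℝ) (hx : 1 ≤ x) (hε0 : 0 < ε) (hε1 : ε < 1/10) :
    (Mmat x + ε • Emat).PosDef := by
  rw [Matrix.posDef_iff_dotProduct_mulVec]
  constructor
  · ext (i | i) (j | j) <;>
      simp [Mmat, Emat, Matrix.conjTranspose_apply, Subsingleton.elim i j]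
  · intro v hv
    have hab : v (Sum.inl 0) ≠ 0 ∨ v (Sum.inr 0) ≠ 0 := by
      by_contra h
      push_neg at h
      apply hv
      funext i
      rcases i with i | i <;> rw [Subsingleton.elim i 0] <;> simp [h.1, h.2]
    set a := v (Sum.inl 0)
    set b := v (Sum.inr 0)
    have hq : star v ⬝ᵥ (Mmat x + ε • Emat) *ᵥ v
        = (x + 2*ε) * a^2 - 10*ε*(a*b) + (1-2*ε) * b^2 := by
      simp [dotProduct, Matrix.mulVec, Fintype.sum_sum_type, Mmat, Emat]
      ring
    rw [hq]
    have habs : 0 < a^2 + b^2 := by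
      rcases hab with h | h
      · positivity
      · positivity
    nlinarith [sq_nonneg (a - 5*ε*b), mul_pos hε0 habs,
      mul_nonneg (by linarith : (0:ℝ) ≤ x - 1) (sq_nonneg a),
      mul_nonneg (by nlinarith : (0:ℝ) ≤ 1 - 3*ε - 25*ε^2) (sq_nonneg b),
      mul_nonneg hε0.le (sq_nonneg a)]

/-- **No uniform constant in the symplectic spectrum stability bound.**
For `M = diag(x,1)`, `E = [[2,−5],[−5,−2]]` and `M_ε = M + εE`: for every
`0 < ε < 1/10` and every `c > 0` there is `x₀ ≥ 1` such that for all `x ≥ x₀`,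
`M` and `M_ε` are positive definite and their Williamson diagonal forms satisfy
`N(D̃ − D̃_ε) > c · N(M − M_ε)` for every unitarily invariant norm `N`. -/
theorem no_uniform_constant (ε : ℝ) (hε0 : 0 < ε) (hε1 : ε < 1 / 10)
    (c : ℝ) (hc : 0 < c) :
    ∃ x₀ : ℝ, 1 ≤ x₀ ∧ ∀ x : ℝ, x₀ ≤ x →
      (Mmat x).PosDef ∧ (Mmat x + ε • Emat).PosDef ∧
      ∀ (d dε : Fin 1 → ℝ) (S Sε : Matrix (Fin 1 ⊕ Fin 1) (Fin 1 ⊕ Fin 1) ℝ),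
        IsSymplectic S → (∀ i, 0 < d i) → Sᵀ * Mmat x * S = Dtilde d →
        IsSymplectic Sε → (∀ i, 0 < dε i) →
        Sεᵀ * (Mmat x + ε • Emat) * Sε = Dtilde dε →
        ∀ N : Matrix (Fin 1 ⊕ Fin 1) (Fin 1 ⊕ Fin 1) ℂ → ℝ,
          IsUnitarilyInvariantNorm N →
          c * N ((Mmat x - (Mmat x + ε • Emat)).map (Complex.ofReal ·)) <
            N ((Dtilde d - Dtilde dε).map (Complex.ofReal ·)) := by
  set B : ℝ := c * Real.sqrt 29 + 1/ε + 1 with hB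
  have hBpos : 0 < B := by
    have : 0 < 1/ε := by positivity
    have : 0 ≤ c * Real.sqrt 29 := by positivity
    simp only [hB]; linarith
  have hB1 : 1 ≤ B := by
    have h10 : 10 < 1/ε := by
      rw [lt_div_iff₀ hε0]; linarith
    have : 0 ≤ c * Real.sqrt 29 := by positivity
    simp only [hB]; linarith
  refine ⟨B^2, by nlinarith, fun x hx => ?_⟩
  have hx1 : (1:ℝ) ≤ x := by nlinarith
  have hx0 : (0:ℝ) ≤ x := by linarith
  refine ⟨posdef_M x hx1, posdef_Mε x ε hx1 hε0 hε1, ?_⟩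
  intro d dε S Sε hS hd hMS hSε hdε hMSε N hN
  obtain ⟨hE, hN1⟩ := norm_facts N hN
  obtain ⟨htri, hsm, hz, hinv⟩ := hN
  -- determinant identities
  have hdet1 : x = d 0 ^ 2 := by
    have := congrArg Matrix.det hMS
    rw [Matrix.det_mul, Matrix.det_mul, Matrix.det_transpose, det_Mmat,
      det_Dtilde] at this
    have hs2 := det_sq_symp hS
    nlinarith [this, hs2]
  set Dε : ℝ := (x + 2*ε) * (1 - 2*ε) - 25*ε^2 with hDε
  have hdet2 : Dε = dε 0 ^ 2 := by
    have := congrArg Matrix.det hMSε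
    rw [Matrix.det_mul, Matrix.det_mul, Matrix.det_transpose, det_Mε,
      det_Dtilde] at this
    have hs2 := det_sq_symp hSε
    nlinarith [this, hs2]
  have hd0 : d 0 = Real.sqrt x := by
    rw [hdet1, Real.sqrt_sq (hd 0).le]
  have hdε0 : dε 0 = Real.sqrt Dε := by
    rw [hdet2, Real.sqrt_sq (hdε 0).le]
  -- bound the sqrt of Dε
  have hεle : 2*ε ≤ 1 := by linarith
  have hDεle : Dε ≤ x * (1 - 2*ε) + 2*ε := by
    simp only [hDε]; nlinarith [sq_nonneg ε, mul_pos hε0 hε0]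
  have hsqDε : Real.sqrt Dε ≤ Real.sqrt x * (1 - ε) + 1 := by
    have h1 : Real.sqrt Dε ≤ Real.sqrt (x * (1 - 2*ε) + 2*ε) := Real.sqrt_le_sqrt hDεle
    have h2 : Real.sqrt (x * (1 - 2*ε) + 2*ε)
        ≤ Real.sqrt (x * (1 - 2*ε)) + Real.sqrt (2*ε) :=
      sqrt_add_le _ _ (by nlinarith) (by linarith)
    have h3 : Real.sqrt (x * (1 - 2*ε)) = Real.sqrt x * Real.sqrt (1 - 2*ε) :=
      Real.sqrt_mul hx0 _
    have h4 : Real.sqrt (1 - 2*ε) ≤ 1 - ε := by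
      have := Real.sqrt_le_sqrt (show 1 - 2*ε ≤ (1 - ε)^2 by nlinarith)
      rwa [Real.sqrt_sq (by linarith)] at this
    have h5 : Real.sqrt (2*ε) ≤ 1 := Real.sqrt_le_one.mpr (by linarith)
    have h6 : Real.sqrt x * Real.sqrt (1 - 2*ε) ≤ Real.sqrt x * (1 - ε) :=
      mul_le_mul_of_nonneg_left h4 (Real.sqrt_nonneg x)
    calc Real.sqrt Dε ≤ Real.sqrt (x * (1 - 2*ε)) + Real.sqrt (2*ε) := le_trans h1 h2
      _ = Real.sqrt x * Real.sqrt (1 - 2*ε) + Real.sqrt (2*ε) := by rw [h3]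
      _ ≤ Real.sqrt x * (1 - ε) + 1 := by linarith
  have hsx : B ≤ Real.sqrt x := by
    have := Real.sqrt_le_sqrt hx
    rwa [Real.sqrt_sq hBpos.le] at this
  set δ : ℝ := d 0 - dε 0 with hδdef
  have hδ : c * (ε * Real.sqrt 29) < δ := by
    have h7 : ε * Real.sqrt x - 1 ≤ δ := by
      simp only [hδdef, hd0, hdε0]; nlinarith
    have h8 : ε * B = c * (ε * Real.sqrt 29) + 1 + ε := by
      rw [hB, mul_add, mul_add, mul_one_div_cancel hε0.ne']; ring
    have h9 : ε * B ≤ ε * Real.sqrt x := mul_le_mul_of_nonneg_left hsx hε0.le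
    linarith
  have hδpos : 0 < δ := lt_trans (by positivity) hδ
  -- rewrite both matrices
  have hMsub : Mmat x - (Mmat x + ε • Emat) = (-ε) • Emat := by
    rw [sub_add_eq_sub_sub, sub_self, zero_sub, neg_smul]
  rw [hMsub, dsub, mapsmul, mapsmul, mapone, hsm, hsm]
  have hnormε : ‖((-ε : ℝ) : ℂ)‖ = ε := by
    rw [Complex.norm_real, Real.norm_eq_abs, abs_neg, abs_of_pos hε0]
  have hnormδ : ‖((δ : ℝ) : ℂ)‖ = δ := by
    rw [Complex.norm_real, Real.norm_eq_abs, abs_of_pos hδpos]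
  rw [hnormε, hnormδ, show Emat.map (Complex.ofReal ·) = EmatC from rfl, hE]
  nlinarith [mul_pos (sub_pos.mpr hδ) hN1]
end

section
/- Instability of the diagonalising matrix at degenerate spectrum: For ε ∈ (0,1) let M_ε = [[1,ε,0,0],[ε,1,0,0],[0,0,1,ε],[0,0,ε,1]] and M′_ε = diag(1+ε, 1−ε, 1+ε, 1−ε), both positive definite 4×4 matrices whose common Williamson diagonal form is D̃_ε = diag(1+ε, 1−ε, 1+ε, 1−ε). Then there exists a constant C > 0, independent of ε, such that for all ε ∈ (0,1) and all S, S′ ∈ Sp(4) with SᵀM_εS = D̃_ε and S′ᵀM′_εS′ = D̃_ε, one has ‖S − S′‖∞ ≥ C. -/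
open Matrix

/-- The operator (spectral) norm `‖·‖∞` of a matrix, i.e. the norm of the induced
linear map on Euclidean space. -/
noncomputable def opNorm {𝕜 : Type*} [RCLike 𝕜] {ι : Type*} [Fintype ι] [DecidableEq ι]
    (A : Matrix ι ι 𝕜) : ℝ :=
  ‖LinearMap.toContinuousLinearMap (Matrix.toEuclideanLin A)‖

/-- The `4 × 4` matrix `[[1,ε,0,0],[ε,1,0,0],[0,0,1,ε],[0,0,ε,1]]` (here `n = 2`). -/
noncomputable def McEx (ε : ℝ) : Matrix (Fin 2 ⊕ Fin 2) (Fin 2 ⊕ Fin 2) ℝ :=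
  Matrix.fromBlocks !![1, ε; ε, 1] 0 0 !![1, ε; ε, 1]

/-- The diagonal matrix `diag(1+ε, 1−ε, 1+ε, 1−ε)`, which is both `M′_ε` and the
common Williamson diagonal form `D̃_ε`. -/
noncomputable def McEx' (ε : ℝ) : Matrix (Fin 2 ⊕ Fin 2) (Fin 2 ⊕ Fin 2) ℝ :=
  Dtilde ![1 + ε, 1 - ε]

/-! ### Auxiliary lemmas -/

lemma symplJ_sq : symplJ 2 * symplJ 2 = -1 := by
  simp [symplJ, Matrix.fromBlocks_multiply, ← Matrix.fromBlocks_one, Matrix.fromBlocks_neg]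

lemma isUnit_symplJ : IsUnit (symplJ 2) :=
  ⟨⟨symplJ 2, -(symplJ 2), by rw [mul_neg, symplJ_sq, neg_neg],
    by rw [neg_mul, symplJ_sq, neg_neg]⟩, rfl⟩

lemma isUnit_of_symplectic {S : Matrix (Fin 2 ⊕ Fin 2) (Fin 2 ⊕ Fin 2) ℝ}
    (hS : IsSymplectic S) : IsUnit S := by
  rw [Matrix.isUnit_iff_isUnit_det]
  have hJ : IsUnit (symplJ 2).det := (Matrix.isUnit_iff_isUnit_det _).mp isUnit_symplJ
  have hdet := congrArg Matrix.det hS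
  rw [Matrix.det_mul, Matrix.det_mul, Matrix.det_transpose] at hdet
  have : IsUnit (S.det * ((symplJ 2).det * S.det)) := by
    rw [← mul_assoc, hdet]; exact hJ
  exact isUnit_of_mul_isUnit_left this

/-- From symplecticity and `Sᵀ M S = D` we get the intertwining relation
`(J M) S = S (J D)`. -/
lemma key_comm {M S D : Matrix (Fin 2 ⊕ Fin 2) (Fin 2 ⊕ Fin 2) ℝ}
    (hS : IsSymplectic S) (hM : Sᵀ * M * S = D) :
    symplJ 2 * M * S = S * (symplJ 2 * D) := by
  have huS : IsUnit Sᵀ := by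
    rw [Matrix.isUnit_iff_isUnit_det, Matrix.det_transpose,
      ← Matrix.isUnit_iff_isUnit_det]
    exact isUnit_of_symplectic hS
  have hu : IsUnit (Sᵀ * symplJ 2) := huS.mul isUnit_symplJ
  refine hu.mul_right_inj.mp ?_
  have lhs : (Sᵀ * symplJ 2) * (symplJ 2 * M * S) = -D := by
    have h : (Sᵀ * symplJ 2) * (symplJ 2 * M * S)
        = Sᵀ * (symplJ 2 * symplJ 2) * (M * S) := by
      simp only [mul_assoc]
    rw [h, symplJ_sq, mul_neg_one, neg_mul, ← mul_assoc, hM]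
  have rhs : (Sᵀ * symplJ 2) * (S * (symplJ 2 * D)) = -D := by
    have h : (Sᵀ * symplJ 2) * (S * (symplJ 2 * D))
        = (Sᵀ * symplJ 2 * S) * (symplJ 2 * D) := by
      simp only [mul_assoc]
    rw [h, hS, ← mul_assoc, symplJ_sq, neg_one_mul]
  rw [lhs, rhs]

/-- The squared intertwining relation `(J M)² S = S (J D)²`. -/
lemma key_sq {M S D : Matrix (Fin 2 ⊕ Fin 2) (Fin 2 ⊕ Fin 2) ℝ}
    (hS : IsSymplectic S) (hM : Sᵀ * M * S = D) :
    symplJ 2 * M * (symplJ 2 * M * S) = S * (symplJ 2 * D) * (symplJ 2 * D) := by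
  rw [key_comm hS hM]
  have h : symplJ 2 * M * (S * (symplJ 2 * D))
      = (symplJ 2 * M * S) * (symplJ 2 * D) := by simp only [mul_assoc]
  rw [h, key_comm hS hM]

/-- Structure of the diagonalising matrix for `M_ε`: within each `2×2` block,
the second row of columns `1` and `3` repeats the first row. -/
lemma relS {ε : ℝ} (hε : 0 < ε) {S : Matrix (Fin 2 ⊕ Fin 2) (Fin 2 ⊕ Fin 2) ℝ}
    (sq : symplJ 2 * McEx ε * (symplJ 2 * McEx ε * S)
        = S * (symplJ 2 * Dtilde ![1+ε,1-ε]) * (symplJ 2 * Dtilde ![1+ε,1-ε])) :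
    S (.inl 1) (.inl 0) = S (.inl 0) (.inl 0) ∧ S (.inl 1) (.inr 0) = S (.inl 0) (.inr 0) ∧
    S (.inr 1) (.inl 0) = S (.inr 0) (.inl 0) ∧ S (.inr 1) (.inr 0) = S (.inr 0) (.inr 0) := by
  have e1 := congrFun (congrFun sq (Sum.inl 1)) (Sum.inl 0)
  have e2 := congrFun (congrFun sq (Sum.inl 1)) (Sum.inr 0)
  have e3 := congrFun (congrFun sq (Sum.inr 1)) (Sum.inl 0)
  have e4 := congrFun (congrFun sq (Sum.inr 1)) (Sum.inr 0)
  simp [Matrix.mul_apply, Fintype.sum_sum_type, Fin.sum_univ_two, symplJ, McEx, Dtilde,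
    Matrix.fromBlocks, Matrix.diagonal] at e1 e2 e3 e4
  refine ⟨mul_left_cancel₀ hε.ne' ?_, mul_left_cancel₀ hε.ne' ?_,
    mul_left_cancel₀ hε.ne' ?_, mul_left_cancel₀ hε.ne' ?_⟩
  · linear_combination e1 / 2
  · linear_combination e2 / 2
  · linear_combination e3 / 2
  · linear_combination e4 / 2

/-- Structure of the diagonalising matrix for `M′_ε`: the four within-block
`(1,0)` entries vanish. -/
lemma relS' {ε : ℝ} (hε : 0 < ε) {S : Matrix (Fin 2 ⊕ Fin 2) (Fin 2 ⊕ Fin 2) ℝ}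
    (sq : symplJ 2 * McEx' ε * (symplJ 2 * McEx' ε * S)
        = S * (symplJ 2 * Dtilde ![1+ε,1-ε]) * (symplJ 2 * Dtilde ![1+ε,1-ε])) :
    S (.inl 1) (.inl 0) = 0 ∧ S (.inl 1) (.inr 0) = 0 ∧
    S (.inr 1) (.inl 0) = 0 ∧ S (.inr 1) (.inr 0) = 0 := by
  have e1 := congrFun (congrFun sq (Sum.inl 1)) (Sum.inl 0)
  have e2 := congrFun (congrFun sq (Sum.inl 1)) (Sum.inr 0)
  have e3 := congrFun (congrFun sq (Sum.inr 1)) (Sum.inl 0)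
  have e4 := congrFun (congrFun sq (Sum.inr 1)) (Sum.inr 0)
  simp [Matrix.mul_apply, Fintype.sum_sum_type, Fin.sum_univ_two, symplJ, McEx', Dtilde,
    Matrix.fromBlocks, Matrix.diagonal] at e1 e2 e3 e4
  have h4 : (4:ℝ) * ε ≠ 0 := by positivity
  refine ⟨?_, ?_, ?_, ?_⟩
  · have h : (4*ε) * S (.inl 1) (.inl 0) = 0 := by linear_combination -e1
    exact (mul_eq_zero.mp h).resolve_left h4
  · have h : (4*ε) * S (.inl 1) (.inr 0) = 0 := by linear_combination -e2
    exact (mul_eq_zero.mp h).resolve_left h4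
  · have h : (4*ε) * S (.inr 1) (.inl 0) = 0 := by linear_combination -e3
    exact (mul_eq_zero.mp h).resolve_left h4
  · have h : (4*ε) * S (.inr 1) (.inr 0) = 0 := by linear_combination -e4
    exact (mul_eq_zero.mp h).resolve_left h4

/-- The symplectic pairing of the first and third columns of a symplectic matrix. -/
lemma sympl_pairing {S : Matrix (Fin 2 ⊕ Fin 2) (Fin 2 ⊕ Fin 2) ℝ} (hS : IsSymplectic S) :
    S (.inl 0) (.inl 0) * S (.inr 0) (.inr 0) + S (.inl 1) (.inl 0) * S (.inr 1) (.inr 0)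
    - S (.inr 0) (.inl 0) * S (.inl 0) (.inr 0) - S (.inr 1) (.inl 0) * S (.inl 1) (.inr 0)
    = 1 := by
  have e := congrFun (congrFun hS (Sum.inl 0)) (Sum.inr 0)
  simp [IsSymplectic, Matrix.mul_apply, Fintype.sum_sum_type, Fin.sum_univ_two, symplJ,
    Matrix.fromBlocks, Matrix.transpose_apply] at e
  linarith [e]

/-- Any matrix entry is bounded by the operator norm. -/
lemma abs_entry_le_opNorm {ι : Type*} [Fintype ι] [DecidableEq ι]
    (A : Matrix ι ι ℝ) (i j : ι) : |A i j| ≤ opNorm A := by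
  have key : ∀ (u : EuclideanSpace ℝ ι) (k : ι), |u k| ≤ ‖u‖ := by
    intro u k
    have h := abs_real_inner_le_norm (EuclideanSpace.single k (1:ℝ)) u
    rw [EuclideanSpace.inner_single_left] at h
    simpa [EuclideanSpace.norm_single] using h
  have happ : (LinearMap.toContinuousLinearMap (Matrix.toEuclideanLin A))
      (EuclideanSpace.single j (1:ℝ)) i = A i j := by
    have h : (LinearMap.toContinuousLinearMap (Matrix.toEuclideanLin A))
        (EuclideanSpace.single j (1:ℝ))
        = (WithLp.equiv 2 (ι → ℝ)).symm (A *ᵥ Pi.single j 1) := rfl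
    rw [h]
    simp only [Matrix.mulVec_single, mul_one, WithLp.equiv, Equiv.refl_apply]
    simp [Matrix.col]
  calc |A i j| = |(LinearMap.toContinuousLinearMap (Matrix.toEuclideanLin A))
        (EuclideanSpace.single j (1:ℝ)) i| := by rw [happ]
    _ ≤ ‖(LinearMap.toContinuousLinearMap (Matrix.toEuclideanLin A))
        (EuclideanSpace.single j (1:ℝ))‖ := key _ _
    _ ≤ opNorm A * ‖EuclideanSpace.single j (1:ℝ)‖ :=
        ContinuousLinearMap.le_opNorm _ _
    _ = opNorm A := by rw [EuclideanSpace.norm_single, norm_one, mul_one]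

lemma mcEx'_posDef {ε : ℝ} (hε0 : 0 < ε) (hε1 : ε < 1) : (McEx' ε).PosDef := by
  rw [McEx', Dtilde, Matrix.fromBlocks_diagonal, Matrix.posDef_diagonal_iff]
  rintro (i | i) <;> fin_cases i <;> simp <;> linarith

lemma mcEx_posDef {ε : ℝ} (hε0 : 0 < ε) (hε1 : ε < 1) : (McEx ε).PosDef := by
  rw [Matrix.posDef_iff_dotProduct_mulVec]
  constructor
  · ext (i|i) (j|j) <;> fin_cases i <;> fin_cases j <;>
      simp [McEx, Matrix.conjTranspose_apply, Matrix.fromBlocks]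
  · intro x hx
    have h1 : (0:ℝ) < 1 - ε := by linarith
    have expand : star x ⬝ᵥ (McEx ε) *ᵥ x =
        (1-ε)*(x (.inl 0))^2 + (1-ε)*(x (.inl 1))^2 + ε*(x (.inl 0) + x (.inl 1))^2 +
        ((1-ε)*(x (.inr 0))^2 + (1-ε)*(x (.inr 1))^2 + ε*(x (.inr 0) + x (.inr 1))^2) := by
      simp [dotProduct, Matrix.mulVec, McEx, Matrix.fromBlocks,
        Fintype.sum_sum_type, Fin.sum_univ_two]
      ring
    rw [expand]
    have t1 : 0 ≤ (1-ε)*(x (.inl 0))^2 := by positivity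
    have t2 : 0 ≤ (1-ε)*(x (.inl 1))^2 := by positivity
    have t3 : 0 ≤ (1-ε)*(x (.inr 0))^2 := by positivity
    have t4 : 0 ≤ (1-ε)*(x (.inr 1))^2 := by positivity
    have s1 : 0 ≤ ε*(x (.inl 0) + x (.inl 1))^2 := by positivity
    have s2 : 0 ≤ ε*(x (.inr 0) + x (.inr 1))^2 := by positivity
    obtain ⟨i, hi⟩ := Function.ne_iff.mp hx
    simp only [Pi.zero_apply] at hi
    have hsq : 0 < x i ^ 2 := by
      have := pow_pos (abs_pos.mpr hi) 2; rwa [sq_abs] at this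
    have hi4 : i = Sum.inl 0 ∨ i = Sum.inl 1 ∨ i = Sum.inr 0 ∨ i = Sum.inr 1 := by
      rcases i with (i | i) <;> fin_cases i <;> simp
    rcases hi4 with h | h | h | h <;> rw [h] at hsq <;>
      linarith [mul_pos h1 hsq]

/-- **Instability of the diagonalising matrix at degenerate spectrum.**
There is a constant `C > 0`, independent of `ε`, such that for all `ε ∈ (0,1)`
the matrices `M_ε` and `M′_ε` are positive definite with common Williamson
diagonal form `D̃_ε = diag(1+ε, 1−ε, 1+ε, 1−ε)`, and any symplectic `S, S′` with
`Sᵀ M_ε S = D̃_ε` and `S′ᵀ M′_ε S′ = D̃_ε` satisfy `‖S − S′‖∞ ≥ C`. -/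
theorem diagonalising_matrix_instability :
    ∃ C : ℝ, 0 < C ∧ ∀ ε : ℝ, 0 < ε → ε < 1 →
      (McEx ε).PosDef ∧ (McEx' ε).PosDef ∧
      ∀ S S' : Matrix (Fin 2 ⊕ Fin 2) (Fin 2 ⊕ Fin 2) ℝ,
        IsSymplectic S → IsSymplectic S' →
        Sᵀ * McEx ε * S = Dtilde ![1 + ε, 1 - ε] →
        S'ᵀ * McEx' ε * S' = Dtilde ![1 + ε, 1 - ε] →
        C ≤ opNorm (S - S') := by
  refine ⟨1/2, by norm_num, fun ε hε0 hε1 => ⟨mcEx_posDef hε0 hε1, mcEx'_posDef hε0 hε1,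
    fun S S' hS hS' hMS hMS' => ?_⟩⟩
  obtain ⟨r1, r2, r3, r4⟩ := relS hε0 (key_sq hS hMS)
  obtain ⟨z1, z2, z3, z4⟩ := relS' hε0 (key_sq hS' hMS')
  have hpair := sympl_pairing hS
  set a := S (.inl 1) (.inl 0) with ha
  set b := S (.inl 1) (.inr 0) with hb
  set c := S (.inr 1) (.inl 0) with hc
  set d := S (.inr 1) (.inr 0) with hd
  have hkey : a * d - c * b = 1/2 := by
    rw [r1, r2, r3, r4] at hpair ⊢
    linarith
  have hmax : 1/2 ≤ |a| ∨ 1/2 ≤ |b| ∨ 1/2 ≤ |c| ∨ 1/2 ≤ |d| := by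
    by_contra hcon
    push_neg at hcon
    obtain ⟨h₁, h₂, h₃, h₄⟩ := hcon
    have had : a * d ≤ |a| * |d| := by
      rw [← abs_mul]; exact le_abs_self _
    have hcb : -(c * b) ≤ |c| * |b| := by
      rw [← abs_mul]; exact neg_le_abs _
    have p1 : |a| * |d| ≤ |a| * (1/2) :=
      mul_le_mul_of_nonneg_left h₄.le (abs_nonneg a)
    have p2 : |a| * (1/2) < (1/2) * (1/2) :=
      mul_lt_mul_of_pos_right h₁ (by norm_num)
    have p3 : |c| * |b| ≤ |c| * (1/2) :=
      mul_le_mul_of_nonneg_left h₂.le (abs_nonneg c)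
    have p4 : |c| * (1/2) < (1/2) * (1/2) :=
      mul_lt_mul_of_pos_right h₃ (by norm_num)
    nlinarith
  have entry_bound : ∀ (i j : Fin 2 ⊕ Fin 2), S' i j = 0 → 1/2 ≤ |S i j| →
      1/2 ≤ opNorm (S - S') := by
    intro i j hz hge
    have h : |(S - S') i j| = |S i j| := by
      rw [Matrix.sub_apply, hz, sub_zero]
    calc (1:ℝ)/2 ≤ |S i j| := hge
      _ = |(S - S') i j| := h.symm
      _ ≤ opNorm (S - S') := abs_entry_le_opNorm _ _ _
  rcases hmax with h | h | h | h
  · exact entry_bound _ _ z1 h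
  · exact entry_bound _ _ z2 h
  · exact entry_bound _ _ z3 h
  · exact entry_bound _ _ z4 h
end

section
/- Uniqueness of the Williamson decomposition up to symplectic-orthogonal matrices: Let M ∈ ℝ^{2n×2n} be positive definite symmetric and let S₁, S₂ ∈ Sp(2n) both satisfy S₁ᵀMS₁ = S₂ᵀMS₂ = D̃, where D̃ is the Williamson diagonal form of M (decreasing order). Then O := S₁⁻¹S₂ is an orthogonal symplectic matrix (O ∈ Sp(2n) ∩ O(2n)) that commutes with D̃; in particular S₁^{−T}S₁^{−1} = S₂^{−T}S₂^{−1}. -/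
open Matrix

lemma symplJ_mul_symplJ (n : ℕ) : symplJ n * symplJ n = -1 := by
  have h : (-1 : Matrix (Fin n ⊕ Fin n) (Fin n ⊕ Fin n) ℝ)
      = Matrix.fromBlocks (-1) 0 0 (-1) := by
    rw [← Matrix.fromBlocks_one, Matrix.fromBlocks_neg]; simp
  rw [symplJ, Matrix.fromBlocks_multiply, h]
  simp

lemma Dtilde_eq_diagonal {n : ℕ} (d : Fin n → ℝ) :
    Dtilde d = Matrix.diagonal (Sum.elim d d) := by
  ext i j
  cases i <;> cases j <;> simp [Dtilde, Matrix.diagonal, Matrix.fromBlocks]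

lemma Dtilde_mul_symplJ {n : ℕ} (d : Fin n → ℝ) :
    Dtilde d * symplJ n = symplJ n * Dtilde d := by
  rw [Dtilde, symplJ, Matrix.fromBlocks_multiply, Matrix.fromBlocks_multiply]
  simp

lemma isUnit_symplJ_det (n : ℕ) : IsUnit (symplJ n).det := by
  apply Matrix.isUnit_det_of_right_inverse (B := -(symplJ n))
  rw [mul_neg, symplJ_mul_symplJ]; simp

lemma isUnit_det_of_symplectic {n : ℕ}
    {S : Matrix (Fin n ⊕ Fin n) (Fin n ⊕ Fin n) ℝ} (hS : IsSymplectic S) :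
    IsUnit S.det := by
  have h := congrArg Matrix.det hS
  rw [Matrix.det_mul, Matrix.det_mul, Matrix.det_transpose] at h
  have hJ := isUnit_symplJ_det n
  rcases eq_or_ne S.det 0 with h0 | h0
  · exfalso
    rw [h0] at h
    simp at h
    exact hJ.ne_zero h.symm
  · exact isUnit_iff_ne_zero.mpr h0

/-- commuting with the square of a positive diagonal implies commuting with it -/
lemma comm_diagonal_of_comm_sq {ι : Type*} [Fintype ι] [DecidableEq ι]
    (f : ι → ℝ) (hf : ∀ i, 0 < f i) (X : Matrix ι ι ℝ)
    (h : X * Matrix.diagonal (fun i => f i * f i)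
        = Matrix.diagonal (fun i => f i * f i) * X) :
    X * Matrix.diagonal f = Matrix.diagonal f * X := by
  ext i j
  have hij := congrFun (congrFun h i) j
  rw [Matrix.mul_diagonal, Matrix.diagonal_mul] at hij ⊢
  rcases eq_or_ne (X i j) 0 with h0 | h0
  · rw [h0]; ring
  · have hsq : f j * f j = f i * f i := mul_left_cancel₀ h0 (by linarith [hij])
    have hfij : f j = f i := by nlinarith [hf i, hf j]
    rw [hfij]; ring


/-- **Uniqueness of the Williamson decomposition up to orthogonal symplectic
matrices.**  If `S₁, S₂ ∈ Sp(2n)` both bring the positive definite `M` to its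
Williamson diagonal form `D̃` (decreasing order), then `O := S₁⁻¹S₂` is symplectic
and orthogonal and commutes with `D̃`; in particular `S₁⁻ᵀS₁⁻¹ = S₂⁻ᵀS₂⁻¹`. -/
theorem williamson_uniqueness (n : ℕ)
    (M S₁ S₂ : Matrix (Fin n ⊕ Fin n) (Fin n ⊕ Fin n) ℝ) (d : Fin n → ℝ)
    (hM : M.PosDef)
    (hS₁ : IsSymplectic S₁) (hS₂ : IsSymplectic S₂)
    (hd : ∀ i, 0 < d i) (hmono : Antitone d)
    (hW₁ : S₁ᵀ * M * S₁ = Dtilde d) (hW₂ : S₂ᵀ * M * S₂ = Dtilde d) :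
    IsSymplectic (S₁⁻¹ * S₂) ∧ (S₁⁻¹ * S₂)ᵀ * (S₁⁻¹ * S₂) = 1 ∧
      (S₁⁻¹ * S₂) * Dtilde d = Dtilde d * (S₁⁻¹ * S₂) ∧
      (S₁⁻¹)ᵀ * S₁⁻¹ = (S₂⁻¹)ᵀ * S₂⁻¹ := by
  set J := symplJ n with hJdef
  set D := Dtilde d with hDdef
  set O := S₁⁻¹ * S₂ with hOdef
  have hu1 : IsUnit S₁.det := isUnit_det_of_symplectic hS₁
  have hu2 : IsUnit S₂.det := isUnit_det_of_symplectic hS₂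
  have h11 : S₁⁻¹ * S₁ = 1 := Matrix.nonsing_inv_mul _ hu1
  have h12 : S₁ * S₁⁻¹ = 1 := Matrix.mul_nonsing_inv _ hu1
  have h21 : S₂⁻¹ * S₂ = 1 := Matrix.nonsing_inv_mul _ hu2
  have h22 : S₂ * S₂⁻¹ = 1 := Matrix.mul_nonsing_inv _ hu2
  -- inverse of a symplectic matrix preserves J
  have hJ1 : (S₁⁻¹)ᵀ * J * S₁⁻¹ = J := by
    calc (S₁⁻¹)ᵀ * J * S₁⁻¹ = (S₁⁻¹)ᵀ * (S₁ᵀ * J * S₁) * S₁⁻¹ := by rw [hS₁]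
      _ = (S₁ * S₁⁻¹)ᵀ * J * (S₁ * S₁⁻¹) := by
          rw [Matrix.transpose_mul]; noncomm_ring
      _ = J := by rw [h12]; simp
  -- inverse of S₁ recovers M from D
  have hM1 : (S₁⁻¹)ᵀ * D * S₁⁻¹ = M := by
    calc (S₁⁻¹)ᵀ * D * S₁⁻¹ = (S₁⁻¹)ᵀ * (S₁ᵀ * M * S₁) * S₁⁻¹ := by rw [hW₁]
      _ = (S₁ * S₁⁻¹)ᵀ * M * (S₁ * S₁⁻¹) := by
          rw [Matrix.transpose_mul]; noncomm_ring
      _ = M := by rw [h12]; simp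
  -- O is symplectic
  have hOsymp : Oᵀ * J * O = J := by
    calc Oᵀ * J * O = S₂ᵀ * ((S₁⁻¹)ᵀ * J * S₁⁻¹) * S₂ := by
          rw [hOdef, Matrix.transpose_mul]; noncomm_ring
      _ = S₂ᵀ * J * S₂ := by rw [hJ1]
      _ = J := hS₂
  -- O fixes D under congruence
  have hOD : Oᵀ * D * O = D := by
    calc Oᵀ * D * O = S₂ᵀ * ((S₁⁻¹)ᵀ * D * S₁⁻¹) * S₂ := by
          rw [hOdef, Matrix.transpose_mul]; noncomm_ring
      _ = S₂ᵀ * M * S₂ := by rw [hM1]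
      _ = D := hW₂
  have huO : IsUnit O.det := isUnit_det_of_symplectic hOsymp
  have hO1 : O⁻¹ * O = 1 := Matrix.nonsing_inv_mul _ huO
  have hO2 : O * O⁻¹ = 1 := Matrix.mul_nonsing_inv _ huO
  have hJJ : J * J = -1 := symplJ_mul_symplJ n
  -- Oᵀ J = J O⁻¹  and  Oᵀ D = D O⁻¹
  have hOJ : Oᵀ * J = J * O⁻¹ := by
    calc Oᵀ * J = Oᵀ * J * (O * O⁻¹) := by rw [hO2, mul_one]
      _ = (Oᵀ * J * O) * O⁻¹ := by noncomm_ring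
      _ = J * O⁻¹ := by rw [hOsymp]
  have hODi : Oᵀ * D = D * O⁻¹ := by
    calc Oᵀ * D = Oᵀ * D * (O * O⁻¹) := by rw [hO2, mul_one]
      _ = (Oᵀ * D * O) * O⁻¹ := by noncomm_ring
      _ = D * O⁻¹ := by rw [hOD]
  -- O⁻¹ J = J Oᵀ
  have hOinvJ : O⁻¹ * J = J * Oᵀ := by
    have h1 : J * (Oᵀ * J) = -O⁻¹ := by
      rw [hOJ, ← mul_assoc, hJJ]; simp
    have h2 : O⁻¹ = -(J * Oᵀ * J) := by rw [mul_assoc, h1]; simp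
    rw [h2]
    calc -(J * Oᵀ * J) * J = -(J * Oᵀ * (J * J)) := by noncomm_ring
      _ = J * Oᵀ := by rw [hJJ]; simp
  -- Oᵀ commutes with D*J
  have hKcomm : Oᵀ * (D * J) = (D * J) * Oᵀ := by
    calc Oᵀ * (D * J) = (Oᵀ * D) * J := by rw [mul_assoc]
      _ = D * (O⁻¹ * J) := by rw [hODi, mul_assoc]
      _ = (D * J) * Oᵀ := by rw [hOinvJ, mul_assoc]
  -- hence with (D*J)² = -D²
  have hDJ : D * J = J * D := Dtilde_mul_symplJ d
  have hK2 : (D * J) * (D * J) = -(D * D) := by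
    calc (D * J) * (D * J) = D * (J * D) * J := by noncomm_ring
      _ = (D * D) * (J * J) := by rw [← hDJ]; noncomm_ring
      _ = -(D * D) := by rw [hJJ]; simp
  have hD2comm : Oᵀ * (D * D) = (D * D) * Oᵀ := by
    have : Oᵀ * ((D * J) * (D * J)) = ((D * J) * (D * J)) * Oᵀ := by
      rw [← mul_assoc, hKcomm, mul_assoc, hKcomm, ← mul_assoc]
    rw [hK2] at this
    have := congrArg Neg.neg this
    simpa using this
  -- Oᵀ commutes with D
  have hDdiag : D = Matrix.diagonal (Sum.elim d d) := Dtilde_eq_diagonal d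
  have hcommT : Oᵀ * D = D * Oᵀ := by
    rw [hDdiag]
    apply comm_diagonal_of_comm_sq (Sum.elim d d)
    · rintro (i | i) <;> exact hd i
    · have hsq : Matrix.diagonal (fun i => Sum.elim d d i * Sum.elim d d i)
          = D * D := by
        rw [hDdiag, Matrix.diagonal_mul_diagonal]
      rw [hsq]; exact hD2comm
  -- orthogonality
  have hDu : IsUnit D.det := by
    rw [hDdiag, Matrix.det_diagonal]
    apply isUnit_iff_ne_zero.mpr
    apply Finset.prod_ne_zero_iff.mpr
    rintro (i | i) _ <;> exact (hd i).ne'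
  have horth : Oᵀ * O = 1 := by
    have hD1 : D * (Oᵀ * O) = D := by
      calc D * (Oᵀ * O) = (D * Oᵀ) * O := by rw [mul_assoc]
        _ = (Oᵀ * D) * O := by rw [hcommT]
        _ = D := hOD
    calc Oᵀ * O = (D⁻¹ * D) * (Oᵀ * O) := by rw [Matrix.nonsing_inv_mul _ hDu, one_mul]
      _ = D⁻¹ * (D * (Oᵀ * O)) := by rw [mul_assoc]
      _ = D⁻¹ * D := by rw [hD1]
      _ = 1 := Matrix.nonsing_inv_mul _ hDu
  -- O commutes with D
  have hOT : Oᵀ = O⁻¹ := by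
    calc Oᵀ = Oᵀ * (O * O⁻¹) := by rw [hO2, mul_one]
      _ = (Oᵀ * O) * O⁻¹ := (mul_assoc _ _ _).symm
      _ = O⁻¹ := by rw [horth, one_mul]
  have hcomm : O * D = D * O := by
    have h : O⁻¹ * D = D * O⁻¹ := by rw [← hOT]; exact hcommT
    calc O * D = O * D * (O⁻¹ * O) := by rw [hO1, mul_one]
      _ = O * (D * O⁻¹) * O := by noncomm_ring
      _ = O * (O⁻¹ * D) * O := by rw [h]
      _ = (O * O⁻¹) * (D * O) := by noncomm_ring
      _ = D * O := by rw [hO2, one_mul]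
  -- S₁⁻ᵀ S₁⁻¹ = S₂⁻ᵀ S₂⁻¹
  have hlast : (S₁⁻¹)ᵀ * S₁⁻¹ = (S₂⁻¹)ᵀ * S₂⁻¹ := by
    have hexp : S₂ᵀ * ((S₁⁻¹)ᵀ * S₁⁻¹) * S₂ = 1 := by
      calc S₂ᵀ * ((S₁⁻¹)ᵀ * S₁⁻¹) * S₂ = Oᵀ * O := by
            rw [hOdef, Matrix.transpose_mul]; noncomm_ring
        _ = 1 := horth
    have hT2 : (S₂⁻¹)ᵀ * S₂ᵀ = 1 := by
      rw [Matrix.transpose_nonsing_inv]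
      exact Matrix.nonsing_inv_mul _ (by rwa [Matrix.det_transpose])
    calc (S₁⁻¹)ᵀ * S₁⁻¹
        = ((S₂⁻¹)ᵀ * S₂ᵀ) * ((S₁⁻¹)ᵀ * S₁⁻¹) * (S₂ * S₂⁻¹) := by
          rw [hT2, h22]; noncomm_ring
      _ = (S₂⁻¹)ᵀ * (S₂ᵀ * ((S₁⁻¹)ᵀ * S₁⁻¹) * S₂) * S₂⁻¹ := by noncomm_ring
      _ = (S₂⁻¹)ᵀ * S₂⁻¹ := by rw [hexp]; simp
  exact ⟨hOsymp, horth, hcomm, hlast⟩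
end

section
/- Bounds on the symplectic eigenvalues: Let M ∈ ℝ^{2n×2n} be positive definite symmetric with symplectic eigenvalues d₁ ≥ … ≥ dₙ > 0. Then d₁ ≤ ‖M‖∞ and dₙ ≥ 1/‖M⁻¹‖∞; equivalently, ‖D̃‖∞ ≤ ‖M‖∞ and ‖D̃⁻¹‖∞ ≤ ‖M⁻¹‖∞ for the Williamson diagonal form D̃ = diag(D,D). -/
open Matrix

open scoped RealInnerProductSpace

section Aux

set_option linter.unusedSectionVars false

variable {ι : Type*} [Fintype ι] [DecidableEq ι]

lemma aux_opNorm_nonneg (A : Matrix ι ι ℝ) : 0 ≤ opNorm A := by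
  unfold opNorm; exact norm_nonneg _

lemma aux_dot_self_nonneg (x : ι → ℝ) : 0 ≤ x ⬝ᵥ x :=
  Finset.sum_nonneg fun i _ => mul_self_nonneg (x i)

lemma aux_quad_upper (A : Matrix ι ι ℝ) (x : ι → ℝ) :
    x ⬝ᵥ A *ᵥ x ≤ opNorm A * (x ⬝ᵥ x) := by
  set T := LinearMap.toContinuousLinearMap (Matrix.toEuclideanLin A) with hT
  set x' : EuclideanSpace ℝ ι := (WithLp.equiv 2 (ι → ℝ)).symm x with hx'
  have h1 : x ⬝ᵥ A *ᵥ x = ⟪x', T x'⟫ := by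
    simp [dotProduct, PiLp.inner_apply, RCLike.inner_apply, hx', hT,
      Matrix.toEuclideanLin_apply, mulVec]
    exact Finset.sum_congr rfl fun _ _ => mul_comm _ _
  have h2 : x ⬝ᵥ x = ‖x'‖ ^ 2 := by
    rw [← real_inner_self_eq_norm_sq]
    simp [dotProduct, PiLp.inner_apply, RCLike.inner_apply, hx']
    rw [EuclideanSpace.norm_eq, Real.sq_sqrt (by positivity)]
    simp [sq]
  rw [h1, h2]
  calc ⟪x', T x'⟫ ≤ ‖x'‖ * ‖T x'‖ := real_inner_le_norm _ _
    _ ≤ ‖x'‖ * (‖T‖ * ‖x'‖) := by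
        have := T.le_opNorm x'
        nlinarith [norm_nonneg x']
    _ = ‖T‖ * ‖x'‖ ^ 2 := by ring

lemma aux_dot_symm {B : Matrix ι ι ℝ} (hB : Bᵀ = B) (x z : ι → ℝ) :
    x ⬝ᵥ B *ᵥ z = z ⬝ᵥ B *ᵥ x := by
  rw [dotProduct_mulVec, ← mulVec_transpose, hB, dotProduct_comm]

lemma aux_transpose_of_posDef {B : Matrix ι ι ℝ} (hB : B.PosDef) : Bᵀ = B := by
  have := hB.isHermitian
  rw [← Matrix.conjTranspose_eq_transpose_of_trivial]; exact this

lemma aux_quad_nonneg {B : Matrix ι ι ℝ} (hB : B.PosDef) (x : ι → ℝ) :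
    0 ≤ x ⬝ᵥ B *ᵥ x := by
  simpa using hB.posSemidef.dotProduct_mulVec_nonneg x

lemma aux_cs {B : Matrix ι ι ℝ} (hB : B.PosDef) (x z : ι → ℝ) :
    (x ⬝ᵥ B *ᵥ z) ^ 2 ≤ (x ⬝ᵥ B *ᵥ x) * (z ⬝ᵥ B *ᵥ z) := by
  by_cases hz : z = 0
  · simp [hz]
  · have hc : 0 < z ⬝ᵥ B *ᵥ z := by simpa using hB.dotProduct_mulVec_pos hz
    set a : ℝ := x ⬝ᵥ B *ᵥ x with ha
    set b : ℝ := x ⬝ᵥ B *ᵥ z with hb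
    set c : ℝ := z ⬝ᵥ B *ᵥ z with hcc
    have h0 : 0 ≤ (c • x - b • z) ⬝ᵥ B *ᵥ (c • x - b • z) := aux_quad_nonneg hB _
    have hexp : (c • x - b • z) ⬝ᵥ B *ᵥ (c • x - b • z) =
        c ^ 2 * a - 2 * c * b * b + b ^ 2 * c := by
      simp only [mulVec_sub, dotProduct_sub, sub_dotProduct, mulVec_smul,
        dotProduct_smul, smul_dotProduct, smul_eq_mul]
      rw [aux_dot_symm (aux_transpose_of_posDef hB) z x]
      simp only [← ha, ← hb, ← hcc]
      ring
    rw [hexp] at h0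
    nlinarith [h0, hc]

lemma aux_quad_lower {M : Matrix ι ι ℝ} (hM : M.PosDef) (x : ι → ℝ) :
    x ⬝ᵥ x ≤ opNorm M⁻¹ * (x ⬝ᵥ M *ᵥ x) := by
  haveI := hM.isUnit.invertible
  have hB : M⁻¹.PosDef := hM.inv
  have hx : M⁻¹ *ᵥ (M *ᵥ x) = x := by
    rw [mulVec_mulVec, Matrix.inv_mul_of_invertible, one_mulVec]
  have h1 : x ⬝ᵥ M⁻¹ *ᵥ (M *ᵥ x) = x ⬝ᵥ x := by rw [hx]
  have hcs := aux_cs hB x (M *ᵥ x)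
  rw [h1] at hcs
  have h2 : (M *ᵥ x) ⬝ᵥ M⁻¹ *ᵥ (M *ᵥ x) = x ⬝ᵥ M *ᵥ x := by
    rw [hx, dotProduct_comm]
  rw [h2] at hcs
  have h3 : x ⬝ᵥ M⁻¹ *ᵥ x ≤ opNorm M⁻¹ * (x ⬝ᵥ x) := aux_quad_upper _ x
  have h4 : 0 ≤ x ⬝ᵥ x := aux_dot_self_nonneg x
  have h5 : 0 ≤ x ⬝ᵥ M *ᵥ x := aux_quad_nonneg hM x
  have h6 : 0 ≤ opNorm M⁻¹ := aux_opNorm_nonneg _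
  rcases eq_or_lt_of_le h4 with h | h
  · rw [← h]; positivity
  · nlinarith [hcs, h3]

lemma aux_diag_opNorm_le (f : ι → ℝ) (c : ℝ) (hc : 0 ≤ c) (h : ∀ i, |f i| ≤ c) :
    opNorm (Matrix.diagonal f) ≤ c := by
  apply ContinuousLinearMap.opNorm_le_bound _ hc
  intro x
  rw [EuclideanSpace.norm_eq, EuclideanSpace.norm_eq]
  have key : ∑ i, ‖(LinearMap.toContinuousLinearMap
        (Matrix.toEuclideanLin (Matrix.diagonal f)) x) i‖ ^ 2
      ≤ c ^ 2 * ∑ i, ‖x i‖ ^ 2 := by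
    rw [Finset.mul_sum]
    apply Finset.sum_le_sum
    intro i _
    have : (LinearMap.toContinuousLinearMap
        (Matrix.toEuclideanLin (Matrix.diagonal f)) x) i = f i * x i := by
      simp [Matrix.toEuclideanLin_apply, mulVec_diagonal]
    rw [this]
    have h1 : |f i * x i| ≤ c * |x i| := by
      rw [abs_mul]
      exact mul_le_mul_of_nonneg_right (h i) (abs_nonneg _)
    calc ‖f i * x i‖ ^ 2 = |f i * x i| ^ 2 := by rw [Real.norm_eq_abs]
      _ ≤ (c * |x i|) ^ 2 := by
          apply sq_le_sq'
          · nlinarith [abs_nonneg (f i * x i)]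
          · exact h1
      _ = c ^ 2 * ‖x i‖ ^ 2 := by rw [Real.norm_eq_abs]; ring
  calc Real.sqrt (∑ i, ‖(LinearMap.toContinuousLinearMap
        (Matrix.toEuclideanLin (Matrix.diagonal f)) x) i‖ ^ 2)
      ≤ Real.sqrt (c ^ 2 * ∑ i, ‖x i‖ ^ 2) := Real.sqrt_le_sqrt key
    _ = c * Real.sqrt (∑ i, ‖x i‖ ^ 2) := by
        rw [Real.sqrt_mul (sq_nonneg c), Real.sqrt_sq hc]

end Aux

section Key

variable {n : ℕ}

lemma aux_J_tJ : (symplJ n)ᵀ * symplJ n = 1 := by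
  simp [symplJ, fromBlocks_transpose, fromBlocks_multiply, ← fromBlocks_one]

lemma aux_J_Jt : symplJ n * (symplJ n)ᵀ = 1 := by
  simp [symplJ, fromBlocks_transpose, fromBlocks_multiply, ← fromBlocks_one]

lemma aux_entry (S A B : Matrix (Fin n ⊕ Fin n) (Fin n ⊕ Fin n) ℝ)
    (h : Sᵀ * A * S = B) (a b : Fin n ⊕ Fin n) :
    (S *ᵥ Pi.single a 1) ⬝ᵥ (A *ᵥ (S *ᵥ Pi.single b 1)) = B a b := by
  have h1 : (S *ᵥ Pi.single a 1) ⬝ᵥ (A *ᵥ (S *ᵥ Pi.single b 1))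
      = Pi.single a 1 ⬝ᵥ ((Sᵀ * A * S) *ᵥ Pi.single b 1) := by
    rw [← mulVec_mulVec, ← mulVec_mulVec, dotProduct_mulVec (Pi.single a 1) Sᵀ,
      vecMul_transpose]
  rw [h1, h]
  simp [mulVec, dotProduct, Pi.single_apply]

lemma aux_key {M S : Matrix (Fin n ⊕ Fin n) (Fin n ⊕ Fin n) ℝ} {d : Fin n → ℝ}
    (hM : M.PosDef) (hS : Sᵀ * symplJ n * S = symplJ n) (hd : ∀ i, 0 < d i)
    (hW : Sᵀ * M * S = Dtilde d) (i : Fin n) :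
    1 ≤ opNorm M⁻¹ * d i := by
  set u := S *ᵥ Pi.single (Sum.inl i) 1 with hu'
  set v := S *ᵥ Pi.single (Sum.inr i) 1 with hv'
  have hu : u ⬝ᵥ M *ᵥ u = d i := by
    rw [aux_entry S M _ hW (Sum.inl i) (Sum.inl i)]
    simp [Dtilde]
  have hv : v ⬝ᵥ M *ᵥ v = d i := by
    rw [aux_entry S M _ hW (Sum.inr i) (Sum.inr i)]
    simp [Dtilde]
  have huv : u ⬝ᵥ (symplJ n *ᵥ v) = 1 := by
    rw [aux_entry S (symplJ n) _ hS (Sum.inl i) (Sum.inr i)]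
    simp [symplJ]
  set w := symplJ n *ᵥ v with hw'
  have hw : w ⬝ᵥ w = v ⬝ᵥ v := by
    rw [hw', dotProduct_mulVec, ← mulVec_transpose, mulVec_mulVec, aux_J_tJ, one_mulVec]
  have hcs : (u ⬝ᵥ w) ^ 2 ≤ (u ⬝ᵥ u) * (w ⬝ᵥ w) := by
    have := Finset.sum_mul_sq_le_sq_mul_sq Finset.univ u w
    simpa [dotProduct, sq] using this
  have hui : u ⬝ᵥ u ≤ opNorm M⁻¹ * d i := by
    have := aux_quad_lower hM u
    rwa [hu] at this
  have hvi : v ⬝ᵥ v ≤ opNorm M⁻¹ * d i := by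
    have := aux_quad_lower hM v
    rwa [hv] at this
  have h1 : 0 ≤ u ⬝ᵥ u := aux_dot_self_nonneg u
  have h2 : 0 ≤ v ⬝ᵥ v := aux_dot_self_nonneg v
  have h3 : 0 ≤ opNorm M⁻¹ := aux_opNorm_nonneg _
  rw [huv] at hcs
  rw [hw] at hcs
  nlinarith [hcs, hui, hvi, hd i]

end Key

/-- **Bounds on the symplectic eigenvalues.**  If `M` is positive definite with
symplectic eigenvalues `d₁ ≥ … ≥ dₙ > 0`, then every `dᵢ ≤ ‖M‖∞` and every
`dᵢ ≥ 1/‖M⁻¹‖∞`; equivalently `‖D̃‖∞ ≤ ‖M‖∞` and `‖D̃⁻¹‖∞ ≤ ‖M⁻¹‖∞` for the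
Williamson diagonal form `D̃ = diag(D,D)`. -/
theorem symplectic_eigenvalue_bounds (n : ℕ)
    (M S : Matrix (Fin n ⊕ Fin n) (Fin n ⊕ Fin n) ℝ) (d : Fin n → ℝ)
    (hM : M.PosDef) (hS : IsSymplectic S)
    (hd : ∀ i, 0 < d i) (hmono : Antitone d)
    (hW : Sᵀ * M * S = Dtilde d) :
    (∀ i, d i ≤ opNorm M) ∧ (∀ i, 1 / opNorm M⁻¹ ≤ d i) ∧
      opNorm (Dtilde d) ≤ opNorm M ∧ opNorm (Dtilde d)⁻¹ ≤ opNorm M⁻¹ := by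
  have hS0 : Sᵀ * symplJ n * S = symplJ n := hS
  set J := symplJ n with hJ
  have hd' : ∀ i, 0 < (d i)⁻¹ := fun i => inv_pos.mpr (hd i)
  -- invertibility of J, S, M
  have hJdet : IsUnit J.det := by
    have h : Jᵀ.det * J.det = 1 := by rw [← det_mul, aux_J_tJ, det_one]
    rw [det_transpose] at h
    exact IsUnit.of_mul_eq_one _ h
  have hSdet : IsUnit S.det := by
    have h1 : Sᵀ.det * J.det * S.det = J.det := by
      rw [← det_mul, ← det_mul, hS0]
    rw [det_transpose] at h1
    have hJ0 : J.det ≠ 0 := hJdet.ne_zero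
    rw [isUnit_iff_ne_zero]
    intro h0
    rw [h0] at h1
    simp at h1
    exact hJ0 h1.symm
  haveI : Invertible S := S.invertibleOfIsUnitDet hSdet
  haveI : Invertible M := hM.isUnit.invertible
  set dinv : Fin n → ℝ := fun i => (d i)⁻¹ with hdinv
  have hdd : (fun i => dinv i * d i) = fun _ => (1 : ℝ) :=
    funext fun i => inv_mul_cancel₀ (hd i).ne'
  have hDD : Dtilde dinv * Dtilde d = 1 := by
    simp only [Dtilde, fromBlocks_multiply, diagonal_mul_diagonal,
      Matrix.mul_zero, Matrix.zero_mul, add_zero, zero_add, Matrix.mul_one]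
    rw [show ((fun i => dinv i * d i) : Fin n → ℝ) = fun _ => (1 : ℝ) from hdd]
    simp [← fromBlocks_one, diagonal_one]
  have hDinv : (Dtilde d)⁻¹ = Dtilde dinv := Matrix.inv_eq_left_inv hDD
  -- M⁻¹ = S * Dtilde dinv * Sᵀ
  have hSM : Sᵀ * M = Dtilde d * S⁻¹ := by
    calc Sᵀ * M = Sᵀ * M * (S * S⁻¹) := by
          rw [Matrix.mul_inv_of_invertible, Matrix.mul_one]
      _ = (Sᵀ * M * S) * S⁻¹ := by rw [Matrix.mul_assoc, ← Matrix.mul_assoc, ← Matrix.mul_assoc]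
      _ = Dtilde d * S⁻¹ := by rw [hW]
  have hMinv : M⁻¹ = S * Dtilde dinv * Sᵀ := by
    apply Matrix.inv_eq_left_inv
    calc (S * Dtilde dinv * Sᵀ) * M = S * (Dtilde dinv * (Sᵀ * M)) := by
          simp only [Matrix.mul_assoc]
      _ = S * (Dtilde dinv * (Dtilde d * S⁻¹)) := by rw [hSM]
      _ = S * ((Dtilde dinv * Dtilde d) * S⁻¹) := by rw [Matrix.mul_assoc]
      _ = S * S⁻¹ := by rw [hDD, Matrix.one_mul]
      _ = 1 := Matrix.mul_inv_of_invertible S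
  -- the dual symplectic matrix T
  set T := Jᵀ * S * J with hT
  have hTt : Tᵀ = Jᵀ * Sᵀ * J := by
    rw [hT, Matrix.transpose_mul, Matrix.transpose_mul, Matrix.transpose_transpose,
      Matrix.mul_assoc]
  have e1 : ∀ X : Matrix (Fin n ⊕ Fin n) (Fin n ⊕ Fin n) ℝ, J * (Jᵀ * X) = X := by
    intro X; rw [← Matrix.mul_assoc, aux_J_Jt, Matrix.one_mul]
  have e3 : ∀ X : Matrix (Fin n ⊕ Fin n) (Fin n ⊕ Fin n) ℝ, Jᵀ * (J * X) = X := by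
    intro X; rw [← Matrix.mul_assoc, aux_J_tJ, Matrix.one_mul]
  have e2 : ∀ X : Matrix (Fin n ⊕ Fin n) (Fin n ⊕ Fin n) ℝ,
      Sᵀ * (J * (S * X)) = J * X := by
    intro X
    rw [← Matrix.mul_assoc, ← Matrix.mul_assoc, hS0]
  have hS0t : Sᵀ * Jᵀ * S = Jᵀ := by
    have := congrArg Matrix.transpose hS0
    simpa [Matrix.transpose_mul, Matrix.mul_assoc, ← Matrix.mul_assoc] using this
  have e4 : ∀ X : Matrix (Fin n ⊕ Fin n) (Fin n ⊕ Fin n) ℝ,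
      Sᵀ * (Jᵀ * (S * X)) = Jᵀ * X := by
    intro X
    rw [← Matrix.mul_assoc, ← Matrix.mul_assoc, hS0t]
  have hTsymp : Tᵀ * symplJ n * T = symplJ n := by
    rw [← hJ, hTt, hT]
    simp only [Matrix.mul_assoc]
    rw [e1, e2, ← Matrix.mul_assoc, aux_J_tJ, Matrix.one_mul]
  have hWinv : Tᵀ * M⁻¹ * T = Dtilde dinv := by
    rw [hTt, hT, hMinv]
    simp only [Matrix.mul_assoc]
    rw [e4 J, aux_J_tJ, Matrix.mul_one, e2 (Dtilde dinv), e3]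
  -- apply the key lemma twice
  have key1 : ∀ i, 1 ≤ opNorm M⁻¹ * d i := fun i => aux_key hM hS0 hd hW i
  have hM' : M⁻¹.PosDef := hM.inv
  have hMM : (M⁻¹)⁻¹ = M :=
    Matrix.nonsing_inv_nonsing_inv M ((Matrix.isUnit_iff_isUnit_det M).mp hM.isUnit)
  have key2 : ∀ i, 1 ≤ opNorm M * dinv i := by
    intro i
    have := aux_key hM' hTsymp hd' hWinv i
    rwa [hMM] at this
  -- upper bound
  have upper : ∀ i, d i ≤ opNorm M := by
    intro i
    have h3 : 1 * d i ≤ (opNorm M * dinv i) * d i :=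
      mul_le_mul_of_nonneg_right (key2 i) (hd i).le
    calc d i = 1 * d i := (one_mul _).symm
      _ ≤ opNorm M * dinv i * d i := h3
      _ = opNorm M := by
          rw [mul_assoc, show dinv i * d i = 1 from inv_mul_cancel₀ (hd i).ne', mul_one]
  -- lower bound
  have hNpos : ∀ i : Fin n, 0 < opNorm M⁻¹ := by
    intro i
    by_contra h0
    push_neg at h0
    nlinarith [key1 i, hd i, mul_nonpos_of_nonpos_of_nonneg h0 (hd i).le]
  have lower : ∀ i, 1 / opNorm M⁻¹ ≤ d i := by
    intro i
    rw [div_le_iff₀ (hNpos i)]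
    nlinarith [key1 i]
  have dinvle : ∀ i, (d i)⁻¹ ≤ opNorm M⁻¹ := by
    intro i
    rw [inv_eq_one_div, div_le_iff₀ (hd i)]
    nlinarith [key1 i]
  -- norm bounds
  have hDdiag : Dtilde d = Matrix.diagonal (Sum.elim d d) := fromBlocks_diagonal d d
  have hDdiag' : Dtilde dinv = Matrix.diagonal (Sum.elim dinv dinv) :=
    fromBlocks_diagonal dinv dinv
  have norm1 : opNorm (Dtilde d) ≤ opNorm M := by
    rw [hDdiag]
    apply aux_diag_opNorm_le _ _ (aux_opNorm_nonneg M)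
    intro j
    cases j with
    | inl i => rw [Sum.elim_inl, abs_of_pos (hd i)]; exact upper i
    | inr i => rw [Sum.elim_inr, abs_of_pos (hd i)]; exact upper i
  have norm2 : opNorm (Dtilde d)⁻¹ ≤ opNorm M⁻¹ := by
    rw [hDinv, hDdiag']
    apply aux_diag_opNorm_le _ _ (aux_opNorm_nonneg M⁻¹)
    intro j
    cases j with
    | inl i => rw [Sum.elim_inl, abs_of_pos (hd' i)]; exact dinvle i
    | inr i => rw [Sum.elim_inr, abs_of_pos (hd' i)]; exact dinvle i
  exact ⟨upper, lower, norm1, norm2⟩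
end

section
/- Operator monotone square-root perturbation bound: Let A, B ∈ ℂ^{n×n} be positive semidefinite Hermitian matrices. Then for every unitarily invariant norm ‖·‖ on n×n complex matrices, ‖A^{1/2} − B^{1/2}‖ ≤ ‖A − B‖∞^{1/2} · ‖Iₙ‖, where ‖·‖∞ is the operator norm and Iₙ the identity matrix. -/
open Matrix
open scoped ComplexOrder

/-- The positive semidefinite square root of a positive semidefinite matrix
(the definition `Matrix.PosSemidef.sqrt` of the older Mathlib, removed since). -/
noncomputable def Matrix.PosSemidef.sqrt {n : Type*} [Fintype n] [DecidableEq n]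
    {𝕜 : Type*} [RCLike 𝕜] {A : Matrix n n 𝕜} (hA : A.PosSemidef) : Matrix n n 𝕜 :=
  hA.1.eigenvectorUnitary.1 * diagonal ((↑) ∘ (√·) ∘ hA.1.eigenvalues) *
  (star hA.1.eigenvectorUnitary : Matrix n n 𝕜)

lemma Matrix.PosSemidef.posSemidef_sqrt {n : Type*} [Fintype n] [DecidableEq n]
    {𝕜 : Type*} [RCLike 𝕜] {A : Matrix n n 𝕜} (hA : A.PosSemidef) : hA.sqrt.PosSemidef := by
  unfold Matrix.PosSemidef.sqrt
  have h := (Matrix.PosSemidef.diagonal (R := 𝕜) (n := n)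
    (d := ((↑) ∘ (√·) ∘ hA.1.eigenvalues)) (fun i => by
      simp only [Function.comp_apply, Pi.zero_apply]
      exact_mod_cast Real.sqrt_nonneg _)).mul_mul_conjTranspose_same
    (hA.1.eigenvectorUnitary : Matrix n n 𝕜)
  simpa [Matrix.star_eq_conjTranspose] using h

lemma Matrix.PosSemidef.sqrt_mul_self {n : Type*} [Fintype n] [DecidableEq n]
    {𝕜 : Type*} [RCLike 𝕜] {A : Matrix n n 𝕜} (hA : A.PosSemidef) :
    hA.sqrt * hA.sqrt = A := by
  unfold Matrix.PosSemidef.sqrt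
  set C : Matrix n n 𝕜 := hA.1.eigenvectorUnitary.1 with hC
  have hCC : star C * C = 1 := Unitary.star_mul_self_of_mem hA.1.eigenvectorUnitary.2
  have e : C * diagonal ((↑) ∘ (√·) ∘ hA.1.eigenvalues) * star C *
      (C * diagonal ((↑) ∘ (√·) ∘ hA.1.eigenvalues) * star C)
      = C * (diagonal ((↑) ∘ (√·) ∘ hA.1.eigenvalues) * (star C * C)
        * diagonal ((↑) ∘ (√·) ∘ hA.1.eigenvalues)) * star C := by
    simp only [Matrix.mul_assoc]
  rw [e, hCC, Matrix.mul_one, diagonal_mul_diagonal]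
  have hd : (fun i => (((↑) ∘ (√·) ∘ hA.1.eigenvalues) i : 𝕜)
      * (((↑) ∘ (√·) ∘ hA.1.eigenvalues) i : 𝕜)) = RCLike.ofReal ∘ hA.1.eigenvalues := by
    funext i
    simp only [Function.comp_apply]
    rw [← RCLike.ofReal_mul, Real.mul_self_sqrt (hA.eigenvalues_nonneg i)]
  rw [hd]
  conv_rhs => rw [hA.1.spectral_theorem]
  rfl

/-- The real part of the quadratic form of `M` at a unit vector is at most `opNorm M`. -/
lemma re_dotProduct_le_opNorm {n : ℕ} (M : Matrix (Fin n) (Fin n) ℂ)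
    (v : EuclideanSpace ℂ (Fin n)) (hv : ‖v‖ = 1) :
    (dotProduct (star ((WithLp.equiv 2 _) v)) (M *ᵥ (WithLp.equiv 2 _) v)).re
      ≤ opNorm M := by
  have h1 : (inner ℂ v (Matrix.toEuclideanLin M v) : ℂ)
      = dotProduct (star ((WithLp.equiv 2 _) v)) (M *ᵥ (WithLp.equiv 2 _) v) := by
    rw [EuclideanSpace.inner_eq_star_dotProduct, dotProduct_comm]
    rfl
  have h2 : ‖(inner ℂ v (Matrix.toEuclideanLin M v) : ℂ)‖ ≤ opNorm M := by
    calc ‖(inner ℂ v (Matrix.toEuclideanLin M v) : ℂ)‖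
        ≤ ‖v‖ * ‖Matrix.toEuclideanLin M v‖ := norm_inner_le_norm _ _
      _ ≤ ‖v‖ * (opNorm M * ‖v‖) := by
          gcongr
          exact (LinearMap.toContinuousLinearMap (Matrix.toEuclideanLin M)).le_opNorm v
      _ = opNorm M := by rw [hv]; ring
  calc (dotProduct (star ((WithLp.equiv 2 _) v)) (M *ᵥ (WithLp.equiv 2 _) v)).re
      ≤ ‖(dotProduct (star ((WithLp.equiv 2 _) v)) (M *ᵥ (WithLp.equiv 2 _) v))‖ :=
        Complex.re_le_norm _
    _ ≤ opNorm M := by rw [← h1] at *; exact h2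

/-- Expansion of the quadratic form of `P*X + X*P + X*X` at an eigenvector of the
Hermitian matrix `X`. -/
lemma quad_eq {n : ℕ} (P X : Matrix (Fin n) (Fin n) ℂ) (hXh : X.IsHermitian)
    (w : Fin n → ℂ) (lam : ℝ) (heig : X *ᵥ w = (lam : ℂ) • w) :
    star w ⬝ᵥ ((P * X + X * P + X * X) *ᵥ w)
      = (lam : ℂ) * (star w ⬝ᵥ (P *ᵥ w)) + (lam : ℂ) * (star w ⬝ᵥ (P *ᵥ w))
        + (lam : ℂ) ^ 2 * (star w ⬝ᵥ w) := by
  have hstar : star w ᵥ* X = (lam : ℂ) • star w := by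
    have := congrArg star heig
    rw [star_mulVec, hXh.eq, star_smul] at this
    simpa [Complex.star_def, Complex.conj_ofReal] using this
  rw [add_mulVec, add_mulVec, dotProduct_add, dotProduct_add]
  congr 1
  · congr 1
    · rw [← mulVec_mulVec, heig, mulVec_smul, dotProduct_smul, smul_eq_mul]
    · rw [← mulVec_mulVec, dotProduct_mulVec, hstar, smul_dotProduct, smul_eq_mul,
        dotProduct_mulVec]
  · rw [← mulVec_mulVec, heig, mulVec_smul, heig, smul_smul, dotProduct_smul, smul_eq_mul, sq]

/-- Key step: a nonnegative eigenvalue `lam` of `√A - √B` satisfies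
`lam ^ 2 ≤ opNorm (A - B)`. -/
lemma key_nonneg {n : ℕ} (A B : Matrix (Fin n) (Fin n) ℂ)
    (hA : A.PosSemidef) (hB : B.PosSemidef)
    (v : EuclideanSpace ℂ (Fin n)) (hv : ‖v‖ = 1) (lam : ℝ) (hlam : 0 ≤ lam)
    (heig : (hA.sqrt - hB.sqrt) *ᵥ ((WithLp.equiv 2 _) v) = (lam : ℂ) • ((WithLp.equiv 2 _) v)) :
    lam ^ 2 ≤ opNorm (A - B) := by
  have hXh : (hA.sqrt - hB.sqrt).IsHermitian :=
    (hA.posSemidef_sqrt.1).sub (hB.posSemidef_sqrt.1)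
  have hAB : A - B = hB.sqrt * (hA.sqrt - hB.sqrt) + (hA.sqrt - hB.sqrt) * hB.sqrt
      + (hA.sqrt - hB.sqrt) * (hA.sqrt - hB.sqrt) := by
    have h : hB.sqrt * (hA.sqrt - hB.sqrt) + (hA.sqrt - hB.sqrt) * hB.sqrt
        + (hA.sqrt - hB.sqrt) * (hA.sqrt - hB.sqrt)
        = hA.sqrt * hA.sqrt - hB.sqrt * hB.sqrt := by noncomm_ring
    rw [h, hA.sqrt_mul_self, hB.sqrt_mul_self]
  set w : Fin n → ℂ := (WithLp.equiv 2 (Fin n → ℂ)) v with hw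
  have hsum := quad_eq hB.sqrt (hA.sqrt - hB.sqrt) hXh w lam heig
  rw [← hAB] at hsum
  have hq0 : (0 : ℂ) ≤ star w ⬝ᵥ (hB.sqrt *ᵥ w) := hB.posSemidef_sqrt.dotProduct_mulVec_nonneg w
  have hww : star w ⬝ᵥ w = 1 := by
    have h : (inner ℂ v v : ℂ) = star w ⬝ᵥ w := by
        rw [EuclideanSpace.inner_eq_star_dotProduct, dotProduct_comm]; rfl
    rw [← h, inner_self_eq_norm_sq_to_K, hv]
    norm_num
  rw [hww, mul_one] at hsum
  have hqre : 0 ≤ (star w ⬝ᵥ (hB.sqrt *ᵥ w)).re := by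
    rw [Complex.le_def] at hq0
    simpa using hq0.1
  have hre : (star w ⬝ᵥ ((A - B) *ᵥ w)).re
      = 2 * lam * (star w ⬝ᵥ (hB.sqrt *ᵥ w)).re + lam ^ 2 := by
    rw [hsum]
    simp [Complex.add_re, Complex.mul_re, Complex.ofReal_re, Complex.ofReal_im, pow_two]
    ring
  have hle : (star w ⬝ᵥ ((A - B) *ᵥ w)).re ≤ opNorm (A - B) :=
    re_dotProduct_le_opNorm (A - B) v hv
  nlinarith [hle, hre, hqre, hlam]

lemma opNorm_sub_comm {n : ℕ} (A B : Matrix (Fin n) (Fin n) ℂ) :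
    opNorm (B - A) = opNorm (A - B) := by
  unfold opNorm
  rw [show B - A = -(A - B) by abel, map_neg, map_neg, norm_neg]

/-- Bound for a unitarily invariant norm of a Hermitian matrix whose eigenvalues
are bounded in absolute value by `c`. -/
lemma uinorm_bound {n : ℕ} (N : Matrix (Fin n) (Fin n) ℂ → ℝ)
    (hN : IsUnitarilyInvariantNorm N) (X : Matrix (Fin n) (Fin n) ℂ)
    (hX : X.IsHermitian) (c : ℝ) (hc : 0 ≤ c)
    (hev : ∀ i, |hX.eigenvalues i| ≤ c) : N X ≤ c * N 1 := by
  obtain ⟨hadd, hsmul, -, hinv⟩ := hN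
  have hNzero : N 0 = 0 := by
    have := hsmul 0 0
    simpa using this
  have hUone : ∀ U : Matrix.unitaryGroup (Fin n) ℂ, N (U : Matrix (Fin n) (Fin n) ℂ) = N 1 := by
    intro U
    have := hinv 1 U 1
    simpa using this
  -- reduce to the diagonal of eigenvalues
  set D : Matrix (Fin n) (Fin n) ℂ :=
    Matrix.diagonal (fun i => (hX.eigenvalues i : ℂ)) with hD
  have hND : N X = N D := by
    have hspec := hX.spectral_theorem
    have h2 := hinv D (hX.eigenvectorUnitary) (star hX.eigenvectorUnitary)
    rw [← h2]
    congr 1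
  rw [hND]
  rcases eq_or_lt_of_le hc with hc0 | hcpos
  · -- c = 0 : all eigenvalues vanish
    have : D = 0 := by
      rw [hD]
      ext i j
      by_cases h : i = j
      · subst h
        have h1 := hev i
        rw [← hc0] at h1
        have : hX.eigenvalues i = 0 := abs_nonpos_iff.mp h1
        simp [this]
      · simp [Matrix.diagonal_apply_ne _ h]
    rw [this, hNzero, ← hc0]
    simp
  · -- c > 0 : write D as (c/2) • (U₁ + U₂) with U₁, U₂ unitary
    set t : Fin n → ℝ := fun i => hX.eigenvalues i / c with ht
    have ht1 : ∀ i, t i ^ 2 ≤ 1 := by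
      intro i
      have habs : |t i| ≤ 1 := by
        rw [ht]
        rw [abs_div, abs_of_pos hcpos, div_le_one hcpos]
        exact hev i
      calc t i ^ 2 = |t i| ^ 2 := (sq_abs _).symm
        _ ≤ 1 ^ 2 := by gcongr <;> simp [abs_nonneg]
        _ = 1 := one_pow 2
    set s : Fin n → ℝ := fun i => Real.sqrt (1 - t i ^ 2) with hs
    have hs2 : ∀ i, s i ^ 2 = 1 - t i ^ 2 := fun i =>
      Real.sq_sqrt (by linarith [ht1 i])
    set u : Fin n → ℂ := fun i => (t i : ℂ) + (s i : ℂ) * Complex.I with hu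
    have hmem : ∀ (f : Fin n → ℝ) (g : Fin n → ℝ), (∀ i, f i ^ 2 + g i ^ 2 = 1) →
        Matrix.diagonal (fun i => (f i : ℂ) + (g i : ℂ) * Complex.I)
          ∈ Matrix.unitaryGroup (Fin n) ℂ := by
      intro f g hfg
      rw [Matrix.mem_unitaryGroup_iff']
      ext i j
      simp only [Matrix.star_eq_conjTranspose, Matrix.diagonal_conjTranspose,
        Matrix.diagonal_mul_diagonal]
      by_cases h : i = j
      · subst h
        simp only [Matrix.diagonal_apply_eq, Matrix.one_apply_eq, Pi.star_apply]
        have : (starRingEnd ℂ) ((f i : ℂ) + (g i : ℂ) * Complex.I)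
            = (f i : ℂ) - (g i : ℂ) * Complex.I := by
          simp [map_add, _root_.map_mul, Complex.conj_ofReal, Complex.conj_I]
          ring
        rw [RCLike.star_def, this]
        have hfg' := hfg i
        have : ((f i : ℂ) - (g i : ℂ) * Complex.I) * ((f i : ℂ) + (g i : ℂ) * Complex.I)
            = ((f i : ℂ))^2 + ((g i : ℂ))^2 := by
          have : Complex.I ^ 2 = -1 := Complex.I_sq
          ring_nf
          rw [this]
          ring
        rw [this]
        push_cast
        rw [show ((f i : ℂ))^2 + ((g i : ℂ))^2 = (((f i ^ 2 + g i ^ 2 : ℝ)) : ℂ) by push_cast; ring]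
        rw [hfg']
        norm_num
      · simp [Matrix.diagonal_apply_ne _ h, Matrix.one_apply_ne h]
    have hmem1 : Matrix.diagonal u ∈ Matrix.unitaryGroup (Fin n) ℂ := by
      rw [hu]
      exact hmem t s (fun i => by rw [hs2 i]; ring)
    have hmem2 : Matrix.diagonal (fun i => (t i : ℂ) + ((-s i : ℝ) : ℂ) * Complex.I)
        ∈ Matrix.unitaryGroup (Fin n) ℂ :=
      hmem t (fun i => -s i) (fun i => by rw [neg_pow, hs2 i]; ring)
    have hDdecomp : D = ((c / 2 : ℝ) : ℂ) • (Matrix.diagonal u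
        + Matrix.diagonal (fun i => (t i : ℂ) + ((-s i : ℝ) : ℂ) * Complex.I)) := by
      rw [hD, hu]
      ext i j
      rcases eq_or_ne i j with rfl | h
      · simp only [Matrix.diagonal_apply_eq, Matrix.smul_apply, Matrix.add_apply, smul_eq_mul]
        have hti : (hX.eigenvalues i : ℂ) = (c : ℂ) * (t i : ℂ) := by
          rw [ht]
          push_cast
          field_simp
        rw [hti]
        push_cast
        ring
      · simp [Matrix.diagonal_apply_ne _ h]
    rw [hDdecomp, hsmul]
    have h1 : N (Matrix.diagonal u
        + Matrix.diagonal (fun i => (t i : ℂ) + ((-s i : ℝ) : ℂ) * Complex.I)) ≤ N 1 + N 1 := by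
      calc N (Matrix.diagonal u
          + Matrix.diagonal (fun i => (t i : ℂ) + ((-s i : ℝ) : ℂ) * Complex.I))
          ≤ N (Matrix.diagonal u)
            + N (Matrix.diagonal (fun i => (t i : ℂ) + ((-s i : ℝ) : ℂ) * Complex.I)) :=
            hadd _ _
        _ = N 1 + N 1 := by
            rw [hUone ⟨_, hmem1⟩, hUone ⟨_, hmem2⟩]
    have hnorm : ‖((c / 2 : ℝ) : ℂ)‖ = c / 2 := by
      rw [Complex.norm_real, Real.norm_eq_abs, abs_of_nonneg (by linarith)]
    rw [hnorm]
    have hN1 : 0 ≤ N 1 := by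
      have hNneg : N (-(1 : Matrix (Fin n) (Fin n) ℂ)) = N 1 := by
        have := hsmul (-1) 1
        simpa using this
      have h0 : N 0 ≤ N 1 + N (-(1 : Matrix (Fin n) (Fin n) ℂ)) := by
        simpa using hadd 1 (-1)
      rw [hNzero, hNneg] at h0
      linarith
    calc c / 2 * N (Matrix.diagonal u
        + Matrix.diagonal (fun i => (t i : ℂ) + ((-s i : ℝ) : ℂ) * Complex.I))
        ≤ c / 2 * (N 1 + N 1) := by
          apply mul_le_mul_of_nonneg_left h1 (by linarith)
      _ = c * N 1 := by ring

/-- **Operator monotone square-root perturbation bound.**  For positive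
semidefinite Hermitian `A, B ∈ ℂ^{n×n}` and every unitarily invariant norm `N`,
`N(A^{1/2} − B^{1/2}) ≤ ‖A − B‖∞^{1/2} · N(Iₙ)`. -/
theorem sqrt_perturbation_bound (n : ℕ) (A B : Matrix (Fin n) (Fin n) ℂ)
    (hA : A.PosSemidef) (hB : B.PosSemidef)
    (N : Matrix (Fin n) (Fin n) ℂ → ℝ) (hN : IsUnitarilyInvariantNorm N) :
    N (hA.sqrt - hB.sqrt) ≤ Real.sqrt (opNorm (A - B)) * N 1 := by
  have hXh : (hA.sqrt - hB.sqrt).IsHermitian :=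
    (hA.posSemidef_sqrt.1).sub (hB.posSemidef_sqrt.1)
  apply uinorm_bound N hN _ hXh _ (Real.sqrt_nonneg _)
  intro i
  have hv1 : ‖(hXh.eigenvectorBasis i : EuclideanSpace ℂ (Fin n))‖ = 1 :=
    hXh.eigenvectorBasis.orthonormal.1 i
  have heig' : (hA.sqrt - hB.sqrt) *ᵥ ((WithLp.equiv 2 (Fin n → ℂ)) (hXh.eigenvectorBasis i))
      = ((hXh.eigenvalues i : ℝ) : ℂ)
        • ((WithLp.equiv 2 (Fin n → ℂ)) (hXh.eigenvectorBasis i)) := by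
    have h := hXh.mulVec_eigenvectorBasis i
    funext j
    have := congrFun h j
    simpa [Complex.real_smul] using this
  have hsq : hXh.eigenvalues i ^ 2 ≤ opNorm (A - B) := by
    rcases le_or_gt 0 (hXh.eigenvalues i) with h | h
    · exact key_nonneg A B hA hB _ hv1 _ h heig'
    · have heig'' : (hB.sqrt - hA.sqrt) *ᵥ ((WithLp.equiv 2 (Fin n → ℂ)) (hXh.eigenvectorBasis i))
          = (((-hXh.eigenvalues i : ℝ)) : ℂ)
            • ((WithLp.equiv 2 (Fin n → ℂ)) (hXh.eigenvectorBasis i)) := by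
        have := congrArg Neg.neg heig'
        rw [← Matrix.neg_mulVec, neg_sub] at this
        rw [this]
        push_cast
        rw [neg_smul]
      have h2 := key_nonneg B A hB hA _ hv1 _ (by linarith) heig''
      rw [opNorm_sub_comm] at h2
      simpa [neg_sq] using h2
  calc |hXh.eigenvalues i| = Real.sqrt (hXh.eigenvalues i ^ 2) := (Real.sqrt_sq_eq_abs _).symm
    _ ≤ Real.sqrt (opNorm (A - B)) := Real.sqrt_le_sqrt hsq
end
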